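/- arXiv:2108.07992 — 6 statements merged into one kernel-verified Lean document; each statement's English description precedes it below -/
import Mathlib

section
/- Let P and Q be discrete measures with at most n supports and weight vectors a, b ∈ ℝ^n_+, let C ∈ ℝ_+^{n×n} be a cost matrix, and let 0 ≤ s ≤ min{‖a‖₁, ‖b‖₁}. For any A > 0, define the extended cost matrix C̄ ∈ ℝ_+^{(n+1)×(n+1)} whose top-left n×n block is C, whose last row and last column are zero except the corner entry C̄_{n+1,n+1} = A, and set ā = [a, ‖b‖₁ − s] ∈ ℝ^{n+1}_+ and b̄ = [b, ‖a‖₁ − s] ∈ ℝ^{n+1}_+. Then min_{X ∈ Π^s(a,b)} ⟨C, X⟩ = min_{X̄ ∈ Π(ā,b̄)} ⟨C̄, X̄⟩, and for any minimizer X̄* of the right-hand problem, its top-left n×n block is a minimizer of the left-hand problem. -/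
open Finset

noncomputable section

/-- Entrywise (Frobenius) inner product of matrices. -/
def dot2 {n : ℕ} (C X : Fin n → Fin n → ℝ) : ℝ :=
  ∑ i, ∑ j, C i j * X i j

/-- The partial transport polytope `Π^s(a, b)`. -/
def PiPartial2 {n : ℕ} (a b : Fin n → ℝ) (s : ℝ) : Set (Fin n → Fin n → ℝ) :=
  {X | (∀ i j, 0 ≤ X i j) ∧ (∀ i, ∑ j, X i j ≤ a i) ∧ (∀ j, ∑ i, X i j ≤ b j) ∧
    ∑ i, ∑ j, X i j = s}

/-- The transport polytope `Π(a, b)` with equality marginal constraints. -/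
def PiEq2 {n : ℕ} (a b : Fin n → ℝ) : Set (Fin n → Fin n → ℝ) :=
  {X | (∀ i j, 0 ≤ X i j) ∧ (∀ i, ∑ j, X i j = a i) ∧ (∀ j, ∑ i, X i j = b j)}

/-- Extended cost matrix: top-left `n × n` block is `C`, last row and column are zero
except the corner entry, which is `A`. -/
def extCost2 {n : ℕ} (C : Fin n → Fin n → ℝ) (A : ℝ) : Fin (n + 1) → Fin (n + 1) → ℝ :=
  fun i j =>
    if hi : i = Fin.last n then (if j = Fin.last n then A else 0)
    else if hj : j = Fin.last n then 0
    else C (i.castPred hi) (j.castPred hj)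

lemma ext_cc {n : ℕ} (C : Fin n → Fin n → ℝ) (A : ℝ) (i j : Fin n) :
    extCost2 C A i.castSucc j.castSucc = C i j := by
  simp [extCost2, (Fin.castSucc_lt_last _).ne]

lemma ext_cl {n : ℕ} (C : Fin n → Fin n → ℝ) (A : ℝ) (i : Fin n) :
    extCost2 C A i.castSucc (Fin.last n) = 0 := by
  simp [extCost2, (Fin.castSucc_lt_last _).ne]

lemma ext_lc {n : ℕ} (C : Fin n → Fin n → ℝ) (A : ℝ) (j : Fin n) :
    extCost2 C A (Fin.last n) j.castSucc = 0 := by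
  simp [extCost2, (Fin.castSucc_lt_last _).ne]

lemma ext_ll {n : ℕ} (C : Fin n → Fin n → ℝ) (A : ℝ) :
    extCost2 C A (Fin.last n) (Fin.last n) = A := by
  simp [extCost2]

lemma dot2_ext {n : ℕ} (C : Fin n → Fin n → ℝ) (A : ℝ) (Y : Fin (n+1) → Fin (n+1) → ℝ) :
    dot2 (extCost2 C A) Y
      = dot2 C (fun i j => Y i.castSucc j.castSucc) + A * Y (Fin.last n) (Fin.last n) := by
  unfold dot2
  rw [Fin.sum_univ_castSucc (f := fun i => ∑ j, extCost2 C A i j * Y i j)]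
  simp [Fin.sum_univ_castSucc, ext_cc, ext_cl, ext_lc, ext_ll]

lemma sum_if_one {m : ℕ} (p : Fin m) (w : Fin m → ℝ) :
    ∑ i, (if i = p then (1:ℝ) else 0) * w i = w p := by
  simp [ite_mul]

def extPlan {n : ℕ} (a b : Fin n → ℝ) (X : Fin n → Fin n → ℝ) :
    Fin (n+1) → Fin (n+1) → ℝ :=
  Fin.snoc (fun i => Fin.snoc (X i) (a i - ∑ k, X i k))
    (Fin.snoc (fun j => b j - ∑ k, X k j) 0)

lemma extPlan_cc {n : ℕ} (a b : Fin n → ℝ) (X : Fin n → Fin n → ℝ) (i j : Fin n) :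
    extPlan a b X i.castSucc j.castSucc = X i j := by simp [extPlan]

lemma extPlan_cl {n : ℕ} (a b : Fin n → ℝ) (X : Fin n → Fin n → ℝ) (i : Fin n) :
    extPlan a b X i.castSucc (Fin.last n) = a i - ∑ k, X i k := by simp [extPlan]

lemma extPlan_lc {n : ℕ} (a b : Fin n → ℝ) (X : Fin n → Fin n → ℝ) (j : Fin n) :
    extPlan a b X (Fin.last n) j.castSucc = b j - ∑ k, X k j := by simp [extPlan]

lemma extPlan_ll {n : ℕ} (a b : Fin n → ℝ) (X : Fin n → Fin n → ℝ) :
    extPlan a b X (Fin.last n) (Fin.last n) = 0 := by simp [extPlan]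

lemma extPlan_mem {n : ℕ} (a b : Fin n → ℝ) (s : ℝ) (X : Fin n → Fin n → ℝ)
    (hX : X ∈ PiPartial2 a b s) :
    extPlan a b X ∈ PiEq2 (Fin.snoc a ((∑ i, b i) - s)) (Fin.snoc b ((∑ i, a i) - s)) := by
  obtain ⟨h0, hra, hcb, htot⟩ := hX
  refine ⟨?_, ?_, ?_⟩
  · intro i j
    induction i using Fin.lastCases with
    | last =>
      induction j using Fin.lastCases with
      | last => simp [extPlan_ll]
      | cast j => rw [extPlan_lc]; linarith [hcb j]
    | cast i =>
      induction j using Fin.lastCases with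
      | last => rw [extPlan_cl]; linarith [hra i]
      | cast j => rw [extPlan_cc]; exact h0 i j
  · intro i
    induction i using Fin.lastCases with
    | last =>
      rw [Fin.sum_univ_castSucc (f := fun j => extPlan a b X (Fin.last n) j)]
      simp only [extPlan_lc, extPlan_ll, Fin.snoc_last, add_zero]
      rw [Finset.sum_sub_distrib]
      have : ∑ j, ∑ k, X k j = s := by rw [Finset.sum_comm]; exact htot
      rw [this]
    | cast i =>
      rw [Fin.sum_univ_castSucc (f := fun j => extPlan a b X i.castSucc j)]
      simp [extPlan_cc, extPlan_cl]
  · intro j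
    induction j using Fin.lastCases with
    | last =>
      rw [Fin.sum_univ_castSucc (f := fun i => extPlan a b X i (Fin.last n))]
      simp only [extPlan_cl, extPlan_ll, Fin.snoc_last, add_zero]
      rw [Finset.sum_sub_distrib, htot]
    | cast j =>
      rw [Fin.sum_univ_castSucc (f := fun i => extPlan a b X i j.castSucc)]
      simp [extPlan_cc, extPlan_lc]

lemma dot2_nonneg {n : ℕ} {C X : Fin n → Fin n → ℝ} (hC : ∀ i j, 0 ≤ C i j)
    (hX : ∀ i j, 0 ≤ X i j) : 0 ≤ dot2 C X := by
  refine Finset.sum_nonneg fun i _ => Finset.sum_nonneg fun j _ => mul_nonneg (hC i j) (hX i j)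

lemma dot2_smul {n : ℕ} (C X : Fin n → Fin n → ℝ) (c : ℝ) :
    dot2 C (fun i j => c * X i j) = c * dot2 C X := by
  unfold dot2
  rw [Finset.mul_sum]
  refine Finset.sum_congr rfl fun i _ => ?_
  rw [Finset.mul_sum]
  exact Finset.sum_congr rfl fun j _ => by ring

/-- facts about the restriction of a feasible extended plan -/
lemma restrict_facts {n : ℕ} (a b : Fin n → ℝ) (s : ℝ)
    (Y : Fin (n+1) → Fin (n+1) → ℝ)
    (hY : Y ∈ PiEq2 (Fin.snoc a ((∑ i, b i) - s)) (Fin.snoc b ((∑ i, a i) - s))) :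
    (∀ i : Fin n, ∑ j : Fin n, Y i.castSucc j.castSucc = a i - Y i.castSucc (Fin.last n)) ∧
    (∀ j : Fin n, ∑ i : Fin n, Y i.castSucc j.castSucc = b j - Y (Fin.last n) j.castSucc) ∧
    (∑ i : Fin n, ∑ j : Fin n, Y i.castSucc j.castSucc = s + Y (Fin.last n) (Fin.last n)) := by
  obtain ⟨h0, hra, hcb⟩ := hY
  have hrow : ∀ i : Fin n, ∑ j : Fin n, Y i.castSucc j.castSucc = a i - Y i.castSucc (Fin.last n) := by
    intro i
    have := hra i.castSucc
    rw [Fin.sum_univ_castSucc (f := fun j => Y i.castSucc j)] at this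
    simp only [Fin.snoc_castSucc] at this
    linarith
  have hcol : ∀ j : Fin n, ∑ i : Fin n, Y i.castSucc j.castSucc = b j - Y (Fin.last n) j.castSucc := by
    intro j
    have := hcb j.castSucc
    rw [Fin.sum_univ_castSucc (f := fun i => Y i j.castSucc)] at this
    simp only [Fin.snoc_castSucc] at this
    linarith
  refine ⟨hrow, hcol, ?_⟩
  have hlastcol := hcb (Fin.last n)
  rw [Fin.sum_univ_castSucc (f := fun i => Y i (Fin.last n))] at hlastcol
  simp only [Fin.snoc_last] at hlastcol
  have hrowlast := hra (Fin.last n)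
  calc ∑ i : Fin n, ∑ j : Fin n, Y i.castSucc j.castSucc
      = ∑ i : Fin n, (a i - Y i.castSucc (Fin.last n)) := Finset.sum_congr rfl fun i _ => hrow i
    _ = ∑ i : Fin n, a i - ∑ i : Fin n, Y i.castSucc (Fin.last n) := Finset.sum_sub_distrib _ _
    _ = s + Y (Fin.last n) (Fin.last n) := by linarith

lemma key {n : ℕ} (a b : Fin n → ℝ) (s : ℝ) (ha : (∑ i, a i) ≠ 0) (hb : (∑ i, b i) ≠ 0)
    (i : Fin n) :
    ∑ j : Fin n, s / ((∑ i, a i) * (∑ i, b i)) * (a i * b j) = a i * (s / ∑ i, a i) := by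
  rw [← Finset.mul_sum, ← Finset.mul_sum]
  field_simp

lemma key2 {n : ℕ} (a b : Fin n → ℝ) (s : ℝ) (ha : (∑ i, a i) ≠ 0) (hb : (∑ i, b i) ≠ 0)
    (j : Fin n) :
    ∑ i : Fin n, s / ((∑ i, a i) * (∑ i, b i)) * (a i * b j) = b j * (s / ∑ i, b i) := by
  have h : ∀ i : Fin n, s / ((∑ i, a i) * (∑ i, b i)) * (a i * b j)
      = s / ((∑ i, a i) * (∑ i, b i)) * b j * a i := fun i => by ring
  rw [Finset.sum_congr rfl fun i _ => h i, ← Finset.mul_sum]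
  field_simp

lemma PiPartial2_nonempty {n : ℕ} (a b : Fin n → ℝ) (ha : ∀ i, 0 ≤ a i) (hb : ∀ i, 0 ≤ b i)
    (s : ℝ) (hs0 : 0 ≤ s) (hsa : s ≤ ∑ i, a i) (hsb : s ≤ ∑ i, b i) :
    (PiPartial2 a b s).Nonempty := by
  rcases eq_or_lt_of_le hs0 with h | h
  · exact ⟨0, fun i j => le_refl 0, fun i => by simpa using ha i,
      fun j => by simpa using hb j, by simp [← h]⟩
  · have hSa : (0:ℝ) < ∑ i, a i := lt_of_lt_of_le h hsa
    have hSb : (0:ℝ) < ∑ i, b i := lt_of_lt_of_le h hsb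
    refine ⟨fun i j => s / ((∑ i, a i) * (∑ i, b i)) * (a i * b j), ?_, ?_, ?_, ?_⟩
    · intro i j
      exact mul_nonneg (div_nonneg hs0 (by positivity)) (mul_nonneg (ha i) (hb j))
    · intro i
      rw [key a b s hSa.ne' hSb.ne' i]
      calc a i * (s / ∑ i, a i) ≤ a i * 1 :=
            mul_le_mul_of_nonneg_left ((div_le_one hSa).mpr hsa) (ha i)
        _ = a i := mul_one _
    · intro j
      rw [key2 a b s hSa.ne' hSb.ne' j]
      calc b j * (s / ∑ i, b i) ≤ b j * 1 :=
            mul_le_mul_of_nonneg_left ((div_le_one hSb).mpr hsb) (hb j)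
        _ = b j := mul_one _
    · rw [Finset.sum_congr rfl fun i _ => key a b s hSa.ne' hSb.ne' i, ← Finset.sum_mul, mul_comm,
        div_mul_cancel₀ s hSa.ne']

/-- From any feasible extended plan, get a feasible partial plan with no greater cost. -/
lemma shrink {n : ℕ} (C : Fin n → Fin n → ℝ) (hC : ∀ i j, 0 ≤ C i j)
    (a b : Fin n → ℝ) (s : ℝ) (hs0 : 0 ≤ s) (A : ℝ) (hA : 0 < A)
    (Y : Fin (n+1) → Fin (n+1) → ℝ)
    (hY : Y ∈ PiEq2 (Fin.snoc a ((∑ i, b i) - s)) (Fin.snoc b ((∑ i, a i) - s))) :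
    ∃ X ∈ PiPartial2 a b s, dot2 C X ≤ dot2 (extCost2 C A) Y := by
  obtain ⟨hrow, hcol, htot⟩ := restrict_facts a b s Y hY
  obtain ⟨h0, -, -⟩ := hY
  set t := Y (Fin.last n) (Fin.last n) with ht
  have ht0 : 0 ≤ t := h0 _ _
  set B : Fin n → Fin n → ℝ := fun i j => Y i.castSucc j.castSucc with hB
  have hB0 : ∀ i j, 0 ≤ B i j := fun i j => h0 _ _
  have hBrow : ∀ i, ∑ j, B i j ≤ a i := fun i => by
    rw [hrow i]; linarith [h0 i.castSucc (Fin.last n)]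
  have hBcol : ∀ j, ∑ i, B i j ≤ b j := fun j => by
    rw [hcol j]; linarith [h0 (Fin.last n) j.castSucc]
  have hdY : dot2 (extCost2 C A) Y = dot2 C B + A * t := dot2_ext C A Y
  rcases eq_or_lt_of_le ht0 with h | h
  · refine ⟨B, ⟨hB0, hBrow, hBcol, by rw [htot, ← h, add_zero]⟩, ?_⟩
    rw [hdY, ← h]; linarith
  · have hst : 0 < s + t := by linarith
    set c : ℝ := s / (s + t) with hc
    have hc0 : 0 ≤ c := div_nonneg hs0 hst.le
    have hc1 : c ≤ 1 := (div_le_one hst).mpr (by linarith)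
    refine ⟨fun i j => c * B i j, ⟨?_, ?_, ?_, ?_⟩, ?_⟩
    · intro i j; exact mul_nonneg hc0 (hB0 i j)
    · intro i
      rw [← Finset.mul_sum]
      calc c * ∑ j, B i j ≤ 1 * ∑ j, B i j :=
            mul_le_mul_of_nonneg_right hc1 (Finset.sum_nonneg fun j _ => hB0 i j)
        _ = ∑ j, B i j := one_mul _
        _ ≤ a i := hBrow i
    · intro j
      rw [← Finset.mul_sum]
      calc c * ∑ i, B i j ≤ 1 * ∑ i, B i j :=
            mul_le_mul_of_nonneg_right hc1 (Finset.sum_nonneg fun i _ => hB0 i j)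
        _ = ∑ i, B i j := one_mul _
        _ ≤ b j := hBcol j
    · have : ∑ i, ∑ j, c * B i j = c * ∑ i, ∑ j, B i j := by
        rw [Finset.mul_sum]; exact Finset.sum_congr rfl fun i _ => (Finset.mul_sum _ _ _).symm
      rw [this, htot, hc, div_mul_cancel₀ s hst.ne']
    · rw [dot2_smul C B c, hdY]
      have hd0 : 0 ≤ dot2 C B := dot2_nonneg hC hB0
      nlinarith

/-- At a minimizer of the extended problem, the corner entry vanishes. -/
lemma corner_zero {n : ℕ} (C : Fin n → Fin n → ℝ) (hC : ∀ i j, 0 ≤ C i j)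
    (a b : Fin n → ℝ) (s : ℝ) (hs0 : 0 ≤ s) (A : ℝ) (hA : 0 < A)
    (Y : Fin (n+1) → Fin (n+1) → ℝ)
    (hY : Y ∈ PiEq2 (Fin.snoc a ((∑ i, b i) - s)) (Fin.snoc b ((∑ i, a i) - s)))
    (hmin : ∀ Z ∈ PiEq2 (Fin.snoc a ((∑ i, b i) - s)) (Fin.snoc b ((∑ i, a i) - s)),
        dot2 (extCost2 C A) Y ≤ dot2 (extCost2 C A) Z) :
    Y (Fin.last n) (Fin.last n) = 0 := by
  by_contra hne
  obtain ⟨hrow, hcol, htot⟩ := restrict_facts a b s Y hY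
  obtain ⟨h0, hra, hcb⟩ := hY
  have ht : 0 < Y (Fin.last n) (Fin.last n) := lt_of_le_of_ne (h0 _ _) (Ne.symm hne)
  -- find a positive entry in the block
  have hpos : ∃ (i : Fin n) (j : Fin n), 0 < Y i.castSucc j.castSucc := by
    by_contra hcon
    push_neg at hcon
    have : ∑ i : Fin n, ∑ j : Fin n, Y i.castSucc j.castSucc = 0 :=
      Finset.sum_eq_zero fun i _ => Finset.sum_eq_zero fun j _ =>
        le_antisymm (hcon i j) (h0 _ _)
    rw [htot] at this
    linarith
  obtain ⟨i, j, hij⟩ := hpos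
  set L := Fin.last n with hL
  set ε : ℝ := min (Y i.castSucc j.castSucc) (Y L L) with hε
  have hε0 : 0 < ε := lt_min hij ht
  have hε1 : ε ≤ Y i.castSucc j.castSucc := min_le_left _ _
  have hε2 : ε ≤ Y L L := min_le_right _ _
  set u : Fin (n+1) → ℝ :=
    fun i' => (if i' = i.castSucc then (1:ℝ) else 0) - (if i' = L then 1 else 0) with hu
  set v : Fin (n+1) → ℝ :=
    fun j' => (if j' = L then (1:ℝ) else 0) - (if j' = j.castSucc then 1 else 0) with hv
  have hus : ∀ w : Fin (n+1) → ℝ, ∑ i', u i' * w i' = w i.castSucc - w L := by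
    intro w
    simp only [hu, sub_mul, Finset.sum_sub_distrib, sum_if_one]
  have hvs : ∀ w : Fin (n+1) → ℝ, ∑ j', v j' * w j' = w L - w j.castSucc := by
    intro w
    simp only [hv, sub_mul, Finset.sum_sub_distrib, sum_if_one]
  have husum : ∑ i', u i' = 0 := by
    have := hus (fun _ => 1); simpa using this
  have hvsum : ∑ j', v j' = 0 := by
    have := hvs (fun _ => 1); simpa using this
  have hicL : i.castSucc ≠ L := (Fin.castSucc_lt_last i).ne
  have hjcL : j.castSucc ≠ L := (Fin.castSucc_lt_last j).ne
  set Z : Fin (n+1) → Fin (n+1) → ℝ := fun i' j' => Y i' j' + ε * (u i' * v j') with hZ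
  have hZmem : Z ∈ PiEq2 (Fin.snoc a ((∑ i, b i) - s)) (Fin.snoc b ((∑ i, a i) - s)) := by
    refine ⟨?_, ?_, ?_⟩
    · have hu1 : u i.castSucc = 1 := by simp [hu, hicL]
      have hu2 : u L = -1 := by simp [hu, hicL.symm]
      have hu0 : ∀ i', i' ≠ i.castSucc → i' ≠ L → u i' = 0 := by
        intro i' h1 h2; simp [hu, h1, h2]
      have hv1 : v L = 1 := by simp [hv, hjcL.symm]
      have hv2 : v j.castSucc = -1 := by simp [hv, hjcL]
      have hv0 : ∀ j', j' ≠ L → j' ≠ j.castSucc → v j' = 0 := by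
        intro j' h1 h2; simp [hv, h1, h2]
      intro i' j'
      show 0 ≤ Y i' j' + ε * (u i' * v j')
      have hy := h0 i' j'
      rcases eq_or_ne i' i.castSucc with h1 | h1
      · subst h1
        rcases eq_or_ne j' L with h3 | h3
        · subst h3; rw [hu1, hv1]; ring_nf; linarith
        · rcases eq_or_ne j' j.castSucc with h4 | h4
          · subst h4; rw [hu1, hv2]; ring_nf; linarith
          · rw [hu1, hv0 j' h3 h4]; ring_nf; linarith
      · rcases eq_or_ne i' L with h2 | h2
        · subst h2
          rcases eq_or_ne j' L with h3 | h3
          · subst h3; rw [hu2, hv1]; ring_nf; linarith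
          · rcases eq_or_ne j' j.castSucc with h4 | h4
            · subst h4; rw [hu2, hv2]; ring_nf; linarith
            · rw [hu2, hv0 j' h3 h4]; ring_nf; linarith
        · rw [hu0 i' h1 h2]; ring_nf; linarith
    · intro i'
      have : ∑ j', Z i' j' = ∑ j', Y i' j' + ε * u i' * ∑ j', v j' := by
        simp only [hZ, Finset.sum_add_distrib]
        rw [Finset.mul_sum]
        congr 1
        exact Finset.sum_congr rfl fun j' _ => by ring
      rw [this, hvsum, mul_zero, add_zero, hra i']
    · intro j'
      have : ∑ i', Z i' j' = ∑ i', Y i' j' + ε * v j' * ∑ i', u i' := by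
        simp only [hZ, Finset.sum_add_distrib]
        rw [Finset.mul_sum]
        congr 1
        exact Finset.sum_congr rfl fun i' _ => by ring
      rw [this, husum, mul_zero, add_zero, hcb j']
  have hcost : dot2 (extCost2 C A) Z
      = dot2 (extCost2 C A) Y - ε * (C i j + A) := by
    have expand : dot2 (extCost2 C A) Z = dot2 (extCost2 C A) Y
        + ε * ∑ i', u i' * ∑ j', v j' * extCost2 C A i' j' := by
      unfold dot2
      simp only [hZ, mul_add, Finset.sum_add_distrib]
      congr 1
      rw [Finset.mul_sum]
      refine Finset.sum_congr rfl fun i' _ => ?_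
      rw [Finset.mul_sum, Finset.mul_sum]
      refine Finset.sum_congr rfl fun j' _ => by ring
    rw [expand]
    have inner : ∀ i', ∑ j', v j' * extCost2 C A i' j'
        = extCost2 C A i' L - extCost2 C A i' j.castSucc := fun i' => hvs _
    rw [Finset.sum_congr rfl fun i' _ => by rw [inner i'], hus]
    rw [hL, ext_cl, ext_cc, ext_ll, ext_lc]
    ring
  have := hmin Z hZmem
  rw [hcost] at this
  nlinarith [hC i j]

lemma ext_nonneg {n : ℕ} (C : Fin n → Fin n → ℝ) (A : ℝ) (hA : 0 ≤ A)
    (hC : ∀ i j, 0 ≤ C i j) : ∀ i' j', 0 ≤ extCost2 C A i' j' := by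
  intro i' j'
  unfold extCost2
  split_ifs <;> first | exact hA | exact le_rfl | exact hC _ _

/-- equivalence of the bi-marginal partial optimal transport problem with
an optimal transport problem on extended marginals `ā = [a, ‖b‖₁ − s]`,
`b̄ = [b, ‖a‖₁ − s]`, and the restriction of any minimizer of the extended problem
to its top-left `n × n` block is a minimizer of the partial problem. -/
theorem pot_ot_equivalence {n : ℕ} (hn : 1 ≤ n)
    (C : Fin n → Fin n → ℝ) (hC : ∀ i j, 0 ≤ C i j)
    (a b : Fin n → ℝ) (ha : ∀ i, 0 ≤ a i) (hb : ∀ i, 0 ≤ b i)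
    (s : ℝ) (hs0 : 0 ≤ s) (hsa : s ≤ ∑ i, a i) (hsb : s ≤ ∑ i, b i)
    (A : ℝ) (hA : 0 < A) :
    (sInf ((fun X => dot2 C X) '' PiPartial2 a b s)
        = sInf ((fun Y => dot2 (extCost2 C A) Y) ''
            PiEq2 (Fin.snoc a ((∑ i, b i) - s)) (Fin.snoc b ((∑ i, a i) - s)))) ∧
    (∀ Y ∈ PiEq2 (Fin.snoc a ((∑ i, b i) - s)) (Fin.snoc b ((∑ i, a i) - s)),
      (∀ Z ∈ PiEq2 (Fin.snoc a ((∑ i, b i) - s)) (Fin.snoc b ((∑ i, a i) - s)),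
        dot2 (extCost2 C A) Y ≤ dot2 (extCost2 C A) Z) →
      (fun i j => Y i.castSucc j.castSucc) ∈ PiPartial2 a b s ∧
        ∀ X ∈ PiPartial2 a b s,
          dot2 C (fun i j => Y i.castSucc j.castSucc) ≤ dot2 C X) := by
  have hext : ∀ X ∈ PiPartial2 a b s,
      dot2 (extCost2 C A) (extPlan a b X) = dot2 C X := by
    intro X _
    rw [dot2_ext, extPlan_ll, mul_zero, add_zero]
    unfold dot2
    exact Finset.sum_congr rfl fun i _ => Finset.sum_congr rfl fun j _ => by
      simp only []
      rw [extPlan_cc]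
  have hLne : ((fun X => dot2 C X) '' PiPartial2 a b s).Nonempty :=
    (PiPartial2_nonempty a b ha hb s hs0 hsa hsb).image _
  have hLbdd : BddBelow ((fun X => dot2 C X) '' PiPartial2 a b s) := by
    refine ⟨0, fun x hx => ?_⟩
    obtain ⟨X, hX, rfl⟩ := hx
    exact dot2_nonneg hC hX.1
  have hRbdd : BddBelow ((fun Y => dot2 (extCost2 C A) Y) ''
      PiEq2 (Fin.snoc a ((∑ i, b i) - s)) (Fin.snoc b ((∑ i, a i) - s))) := by
    refine ⟨0, fun x hx => ?_⟩
    obtain ⟨Y, hY, rfl⟩ := hx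
    exact dot2_nonneg (ext_nonneg C A hA.le hC) hY.1
  have hsub : ((fun X => dot2 C X) '' PiPartial2 a b s) ⊆
      ((fun Y => dot2 (extCost2 C A) Y) ''
        PiEq2 (Fin.snoc a ((∑ i, b i) - s)) (Fin.snoc b ((∑ i, a i) - s))) := by
    rintro x ⟨X, hX, rfl⟩
    exact ⟨extPlan a b X, extPlan_mem a b s X hX, hext X hX⟩
  have hRne : ((fun Y => dot2 (extCost2 C A) Y) ''
      PiEq2 (Fin.snoc a ((∑ i, b i) - s)) (Fin.snoc b ((∑ i, a i) - s))).Nonempty := by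
    obtain ⟨x, hx⟩ := hLne
    exact ⟨x, hsub hx⟩
  constructor
  · refine le_antisymm ?_ (csInf_le_csInf hRbdd hLne hsub)
    refine le_csInf hRne ?_
    rintro r ⟨Y, hY, rfl⟩
    obtain ⟨X, hXmem, hle⟩ := shrink C hC a b s hs0 A hA Y hY
    exact le_trans (csInf_le hLbdd ⟨X, hXmem, rfl⟩) hle
  · intro Y hY hmin
    have hc0 := corner_zero C hC a b s hs0 A hA Y hY hmin
    obtain ⟨hrowf, hcolf, htotf⟩ := restrict_facts a b s Y hY
    have h0 := hY.1
    have hmem : (fun i j => Y i.castSucc j.castSucc) ∈ PiPartial2 a b s := by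
      refine ⟨fun i j => h0 _ _, fun i => ?_, fun j => ?_, ?_⟩
      · rw [hrowf i]; linarith [h0 i.castSucc (Fin.last n)]
      · rw [hcolf j]; linarith [h0 (Fin.last n) j.castSucc]
      · rw [htotf, hc0, add_zero]
    refine ⟨hmem, fun X hX => ?_⟩
    have h1 : dot2 C (fun i j => Y i.castSucc j.castSucc) = dot2 (extCost2 C A) Y := by
      rw [dot2_ext C A Y, hc0, mul_zero, add_zero]
    rw [h1, ← hext X hX]
    exact hmin _ (extPlan_mem a b s X hX)
end
end

section
/- Assume Σ_r := Σ_{i=1}^m ‖r_i‖₁ ≥ (m−1)‖r_k‖₁ + s for all k ∈ [m]. Define extended marginals r̄_k^{(1)} = [r_k, Σ_r/(m−1) − ‖r_k‖₁ − s/(m−1)] ∈ ℝ^{n+1}_+ and the extended cost tensor C̄^{(1)} ∈ ℝ_+^{(n+1)^m} by C̄^{(1)}_v = C_v for v ∈ T_∅ and C̄^{(1)}_v = A_i for v ∈ T_S with |S| = i, where the reals A_i satisfy 0 = A_1 < A_2 < … < A_m. Then min_{X ∈ Π^s(r_1,…,r_m)} ⟨C, X⟩ = min_{X̄ ∈ Π(r̄_1^{(1)},…,r̄_m^{(1)})}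 ⟨C̄^{(1)}, X̄⟩. -/
open Finset

noncomputable section

namespace MPOT

/-- The `k`-th marginal of a tensor indexed by `[n]^m` (functions `Fin m → Fin n`). -/
def marg {m n : ℕ} (X : (Fin m → Fin n) → ℝ) (k : Fin m) (j : Fin n) : ℝ :=
  ∑ v : Fin m → Fin n, if v k = j then X v else 0

/-- Entrywise (Frobenius) inner product of tensors. -/
def dot {m n : ℕ} (C X : (Fin m → Fin n) → ℝ) : ℝ :=
  ∑ v : Fin m → Fin n, C v * X v

/-- The partial transport polytope `Π^s(r_1, …, r_m)`. -/
def PiPartial {m n : ℕ} (r : Fin m → Fin n → ℝ) (s : ℝ) :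
    Set ((Fin m → Fin n) → ℝ) :=
  {X | (∀ v, 0 ≤ X v) ∧ (∀ k j, marg X k j ≤ r k j) ∧ ∑ v : Fin m → Fin n, X v = s}

/-- The transport polytope `Π(a_1, …, a_m)` with equality marginal constraints. -/
def PiEq {m n : ℕ} (a : Fin m → Fin n → ℝ) : Set ((Fin m → Fin n) → ℝ) :=
  {X | (∀ v, 0 ≤ X v) ∧ ∀ k j, marg X k j = a k j}

/-- Embedding of `[n]^m` into `[n+1]^m`. -/
def emb {m n : ℕ} (v : Fin m → Fin n) : Fin m → Fin (n + 1) :=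
  fun i => (v i).castSucc

/-- Restriction of a tensor on `[n+1]^m` to the indices in `[n]^m`. -/
def restr {m n : ℕ} (X : (Fin m → Fin (n + 1)) → ℝ) : (Fin m → Fin n) → ℝ :=
  fun v => X (emb v)

/-- The number of coordinates of `u` equal to `n+1` (i.e. `Fin.last n`); `u ∈ T_S`
with `|S| = nLast u`. -/
def nLast {m n : ℕ} (u : Fin m → Fin (n + 1)) : ℕ :=
  (univ.filter fun ℓ => u ℓ = Fin.last n).card

/-- Extended cost tensor: the original cost on `T_∅ = [n]^m`, and value `A i` on the
`i`-th layer `∪_{|S| = i} T_S`. -/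
def extCost {m n : ℕ} (C : (Fin m → Fin n) → ℝ) (A : ℕ → ℝ) :
    (Fin m → Fin (n + 1)) → ℝ :=
  fun u =>
    if h : ∀ i, u i ≠ Fin.last n then C fun i => (u i).castPred (h i)
    else A (nLast u)

/-- Total mass of `X` on the sublayer `T_S`. -/
def layerSum {m n : ℕ} (X : (Fin m → Fin (n + 1)) → ℝ) (S : Finset (Fin m)) : ℝ :=
  ∑ u : Fin m → Fin (n + 1), if ∀ ℓ, (u ℓ = Fin.last n ↔ ℓ ∈ S) then X u else 0

/-- First-form extended marginals `r̄_k^{(1)} = [r_k, Σ_r/(m−1) − ‖r_k‖₁ − s/(m−1)]`. -/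
def extMarg1 {m n : ℕ} (r : Fin m → Fin n → ℝ) (s : ℝ) : Fin m → Fin (n + 1) → ℝ :=
  fun k => Fin.snoc (r k)
    ((∑ i, ∑ j, r i j) / ((m : ℝ) - 1) - (∑ j, r k j) - s / ((m : ℝ) - 1))

/-- Second-form extended marginals `r̄_k^{(2)} = [r_k, Σ_{i≠k} ‖r_i‖₁ − (m−1)s]`. -/
def extMarg2 {m n : ℕ} (r : Fin m → Fin n → ℝ) (s : ℝ) : Fin m → Fin (n + 1) → ℝ :=
  fun k => Fin.snoc (r k) ((∑ i ∈ univ.erase k, ∑ j, r i j) - ((m : ℝ) - 1) * s)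

end MPOT

open MPOT



namespace MP
variable {m n N : ℕ}

/-! ### generic helpers -/

lemma sum_marg (X : (Fin m → Fin n) → ℝ) (k : Fin m) :
    ∑ j, marg X k j = ∑ v, X v := by
  unfold marg
  rw [Finset.sum_comm]
  exact Finset.sum_congr rfl fun v _ => by simp

lemma marg_nonneg {X : (Fin m → Fin n) → ℝ} (hX : ∀ v, 0 ≤ X v) (k : Fin m) (j : Fin n) :
    0 ≤ marg X k j :=
  Finset.sum_nonneg fun v _ => by by_cases h : v k = j <;> simp [h, hX v]

def prodT (g : Fin m → Fin N → ℝ) : (Fin m → Fin N) → ℝ :=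
  fun u => ∏ i, g i (u i)

lemma sum_prodT (g : Fin m → Fin N → ℝ) :
    ∑ u : Fin m → Fin N, prodT g u = ∏ i, ∑ x, g i x :=
  (Fintype.prod_sum g).symm

lemma marg_prodT (g : Fin m → Fin N → ℝ) (k : Fin m) (j : Fin N) :
    marg (prodT g) k j = g k j * ∏ i ∈ univ.erase k, ∑ x, g i x := by
  classical
  set h : Fin m → Fin N → ℝ := fun i x => if i = k then (if x = j then g i x else 0) else g i x
    with hh
  have key : ∀ u : Fin m → Fin N,
      (if u k = j then prodT g u else 0) = prodT h u := by
    intro u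
    unfold prodT
    by_cases huk : u k = j
    · simp only [huk, if_pos]
      refine Finset.prod_congr rfl fun i _ => ?_
      by_cases hik : i = k <;> simp [hh, hik, huk]
    · simp only [huk, if_neg, if_false]
      symm
      apply Finset.prod_eq_zero (Finset.mem_univ k)
      simp [hh, huk]
  have h2 : marg (prodT g) k j = ∑ u : Fin m → Fin N, prodT h u := by
    unfold marg; exact Finset.sum_congr rfl fun u _ => key u
  rw [h2, sum_prodT]
  rw [← Finset.mul_prod_erase univ (fun i => ∑ x, h i x) (Finset.mem_univ k)]
  congr 1
  · simp [hh]
  · refine Finset.prod_congr rfl fun i hi => ?_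
    have : i ≠ k := Finset.ne_of_mem_erase hi
    simp [hh, this]

lemma emb_inj : Function.Injective (emb (m := m) (n := n)) := by
  intro a b hab
  funext i
  have := congrFun hab i
  simpa [emb, Fin.castSucc_inj] using this

lemma allReal_mem_image {u : Fin m → Fin (n+1)} (h : ∀ i, u i ≠ Fin.last n) :
    u ∈ Finset.image emb (univ : Finset (Fin m → Fin n)) := by
  refine Finset.mem_image.2 ⟨fun i => (u i).castPred (h i), Finset.mem_univ _, ?_⟩
  funext i; simp [emb]

lemma sum_emb (f : (Fin m → Fin (n+1)) → ℝ)
    (hf : ∀ u, ¬(∀ i, u i ≠ Fin.last n) → f u = 0) :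
    ∑ u : Fin m → Fin (n+1), f u = ∑ v : Fin m → Fin n, f (emb v) := by
  rw [← Finset.sum_image (fun a _ b _ h => emb_inj h)]
  symm
  apply Finset.sum_subset (Finset.subset_univ _)
  intro u _ hu
  exact hf u (fun hall => hu (allReal_mem_image hall))

def ext0 {m n : ℕ} (X : (Fin m → Fin n) → ℝ) : (Fin m → Fin (n+1)) → ℝ :=
  fun u => if h : ∀ i, u i ≠ Fin.last n then X (fun i => (u i).castPred (h i)) else 0

lemma emb_allReal (v : Fin m → Fin n) : ∀ i, emb v i ≠ Fin.last n := by
  intro i; exact Fin.ne_of_lt (Fin.castSucc_lt_last _)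

lemma ext0_emb (X : (Fin m → Fin n) → ℝ) (v : Fin m → Fin n) : ext0 X (emb v) = X v := by
  rw [ext0, dif_pos (emb_allReal v)]
  simp [emb]

lemma extCost_emb (C : (Fin m → Fin n) → ℝ) (A : ℕ → ℝ) (v : Fin m → Fin n) :
    extCost C A (emb v) = C v := by
  rw [extCost, dif_pos (emb_allReal v)]
  simp [emb]

lemma marg_ext0_castSucc (X : (Fin m → Fin n) → ℝ) (k : Fin m) (j : Fin n) :
    marg (ext0 X) k (j.castSucc) = marg X k j := by
  unfold marg
  rw [sum_emb]
  · refine Finset.sum_congr rfl fun v _ => ?_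
    rw [ext0_emb]
    by_cases h : v k = j <;> simp [emb, Fin.castSucc_inj, h]
  · intro u hu
    by_cases h : u k = j.castSucc
    · simp only [h, if_pos]; rw [ext0, dif_neg hu]
    · simp [h]

lemma marg_ext0_last (X : (Fin m → Fin n) → ℝ) (k : Fin m) :
    marg (ext0 X) k (Fin.last n) = 0 := by
  unfold marg
  apply Finset.sum_eq_zero
  intro u _
  by_cases h : u k = Fin.last n
  · simp only [h, if_pos]
    rw [ext0, dif_neg]
    push_neg
    exact ⟨k, h⟩
  · simp [h]

lemma marg_add (X Y : (Fin m → Fin n) → ℝ) (k : Fin m) (j : Fin n) :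
    marg (fun u => X u + Y u) k j = marg X k j + marg Y k j := by
  unfold marg
  rw [← Finset.sum_add_distrib]
  exact Finset.sum_congr rfl fun u _ => by by_cases h : u k = j <;> simp [h]

lemma marg_sum (F : Fin m → (Fin m → Fin n) → ℝ) (k : Fin m) (j : Fin n) :
    marg (fun u => ∑ ℓ, F ℓ u) k j = ∑ ℓ, marg (F ℓ) k j := by
  unfold marg
  rw [Finset.sum_comm]
  exact Finset.sum_congr rfl fun u _ => by by_cases h : u k = j <;> simp [h]

lemma marg_smul (c : ℝ) (X : (Fin m → Fin n) → ℝ) (k : Fin m) (j : Fin n) :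
    marg (fun u => c * X u) k j = c * marg X k j := by
  unfold marg
  rw [Finset.mul_sum]
  exact Finset.sum_congr rfl fun u _ => by by_cases h : u k = j <;> simp [h]

lemma dot_add (C X Y : (Fin m → Fin n) → ℝ) :
    dot C (fun u => X u + Y u) = dot C X + dot C Y := by
  unfold dot
  rw [← Finset.sum_add_distrib]
  exact Finset.sum_congr rfl fun u _ => by ring

lemma dot_sum (C : (Fin m → Fin n) → ℝ) (F : Fin m → (Fin m → Fin n) → ℝ) :
    dot C (fun u => ∑ ℓ, F ℓ u) = ∑ ℓ, dot C (F ℓ) := by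
  unfold dot
  rw [Finset.sum_comm]
  exact Finset.sum_congr rfl fun u _ => by rw [Finset.mul_sum]

lemma dot_nonneg {C X : (Fin m → Fin n) → ℝ} (hC : ∀ v, 0 ≤ C v) (hX : ∀ v, 0 ≤ X v) :
    0 ≤ dot C X :=
  Finset.sum_nonneg fun v _ => mul_nonneg (hC v) (hX v)

lemma nLast_eq_zero {u : Fin m → Fin (n+1)} (h : ∀ i, u i ≠ Fin.last n) : nLast u = 0 := by
  unfold nLast
  rw [Finset.card_eq_zero, Finset.filter_eq_empty_iff]
  exact fun ⦃x⦄ _ => h x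

lemma one_le_nLast {u : Fin m → Fin (n+1)} (h : ¬ ∀ i, u i ≠ Fin.last n) : 1 ≤ nLast u := by
  push_neg at h
  obtain ⟨i, hi⟩ := h
  have : i ∈ univ.filter fun ℓ => u ℓ = Fin.last n := by simp [hi]
  exact Finset.card_pos.2 ⟨i, this⟩

lemma nLast_le (u : Fin m → Fin (n+1)) : nLast u ≤ m := by
  calc nLast u ≤ (univ : Finset (Fin m)).card := Finset.card_filter_le _ _
  _ = m := by simp

end MP

namespace MPA
open MP
variable {m n : ℕ}

theorem existsA (hm : 2 ≤ m)
    (C : (Fin m → Fin n) → ℝ)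
    (r : Fin m → Fin n → ℝ)
    (s : ℝ) (hs : ∀ k, s ≤ ∑ j, r k j)
    (hcond : ∀ k, ((m : ℝ) - 1) * (∑ j, r k j) + s ≤ ∑ i, ∑ j, r i j)
    (A : ℕ → ℝ) (hA1 : A 1 = 0)
    (X : (Fin m → Fin n) → ℝ) (hX : X ∈ PiPartial r s) :
    ∃ Y ∈ PiEq (extMarg1 r s), dot (extCost C A) Y = dot C X := by
  classical
  obtain ⟨hX0, hXm, hXs⟩ := hX
  have hm1 : (0:ℝ) < (m:ℝ) - 1 := by
    have : (2:ℝ) ≤ (m:ℝ) := by exact_mod_cast hm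
    linarith
  set σ : Fin m → ℝ := fun k => ∑ j, r k j with hσ
  set Sr : ℝ := ∑ i, σ i with hSr
  set M : ℝ := (Sr - s) / ((m:ℝ) - 1) with hM
  have hMkey : ((m:ℝ) - 1) * M = Sr - s := by
    rw [hM]; field_simp
  set d : Fin m → Fin n → ℝ := fun k j => r k j - marg X k j with hd
  set b : Fin m → ℝ := fun k => σ k - s with hb
  set t : Fin m → ℝ := fun ℓ => M - σ ℓ with ht
  have hd0 : ∀ k j, 0 ≤ d k j := fun k j => sub_nonneg.2 (hXm k j)
  have hdsum : ∀ k, ∑ j, d k j = b k := by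
    intro k
    simp only [hd, Finset.sum_sub_distrib, sum_marg, hXs, hb]
    rfl
  have hb0 : ∀ k, 0 ≤ b k := fun k => sub_nonneg.2 (hs k)
  have ht0 : ∀ ℓ, 0 ≤ t ℓ := by
    intro ℓ
    have h := hcond ℓ
    rw [ht, sub_nonneg, hM, le_div_iff₀ hm1]
    rw [hσ] at *
    rw [hSr]
    simp only [hσ]
    linarith
  have hdzero : ∀ k, b k = 0 → ∀ j, d k j = 0 := by
    intro k hk j
    have := hdsum k
    rw [hk] at this
    exact (Finset.sum_eq_zero_iff_of_nonneg (fun j _ => hd0 k j)).1 this j (Finset.mem_univ j)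
  have htsum_erase : ∀ k, ∑ ℓ ∈ univ.erase k, t ℓ = b k := by
    intro k
    have h1 : ∑ ℓ, t ℓ = (m:ℝ) * M - Sr := by
      simp only [ht, Finset.sum_sub_distrib, Finset.sum_const, Finset.card_univ,
        Fintype.card_fin, nsmul_eq_mul, hSr]
    have h2 : ∑ ℓ ∈ univ.erase k, t ℓ = (∑ ℓ, t ℓ) - t k := by
      rw [← Finset.add_sum_erase univ t (Finset.mem_univ k)]; ring
    rw [h2, h1]
    simp only [ht, hb]
    have h3 : (m:ℝ) * M - M = Sr - s := by
      have h4 : (m:ℝ) * M - M = ((m:ℝ) - 1) * M := by ring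
      rw [h4, hMkey]
    linarith
  have hL1 : ∀ i, b i = 0 → ∀ ℓ, ℓ ≠ i → t ℓ = 0 := by
    intro i hi ℓ hℓ
    have hmem : ℓ ∈ univ.erase i := Finset.mem_erase.2 ⟨hℓ, Finset.mem_univ ℓ⟩
    have hle : t ℓ ≤ ∑ ℓ' ∈ univ.erase i, t ℓ' :=
      Finset.single_le_sum (fun ℓ' _ => ht0 ℓ') hmem
    rw [htsum_erase, hi] at hle
    exact le_antisymm hle (ht0 ℓ)
  -- the pieces
  set ρ : Fin m → Fin (n+1) → ℝ :=
    fun k => Fin.snoc (fun j => if b k = 0 then 0 else d k j / b k) 0 with hρ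
  set g : Fin m → Fin m → Fin (n+1) → ℝ :=
    fun ℓ k => if k = ℓ then (fun x => if x = Fin.last n then t ℓ else 0) else ρ k with hg
  set Y : (Fin m → Fin (n+1)) → ℝ := fun u => ext0 X u + ∑ ℓ, prodT (g ℓ) u with hY
  have hρcs : ∀ k (j : Fin n), ρ k j.castSucc = if b k = 0 then 0 else d k j / b k := by
    intro k j; simp [hρ]
  have hρlast : ∀ k, ρ k (Fin.last n) = 0 := by intro k; simp [hρ]
  have hρ0 : ∀ k x, 0 ≤ ρ k x := by
    intro k x
    refine Fin.lastCases ?_ ?_ x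
    · simp [hρlast]
    · intro j
      rw [hρcs]
      by_cases hbk : b k = 0
      · simp [hbk]
      · rw [if_neg hbk]
        exact div_nonneg (hd0 k j) (hb0 k)
  have hρsum : ∀ k, ∑ x, ρ k x = if b k = 0 then 0 else 1 := by
    intro k
    rw [Fin.sum_univ_castSucc]
    simp only [hρlast, add_zero]
    by_cases hbk : b k = 0
    · simp [hρcs, hbk]
    · simp only [hρcs, if_neg hbk]
      rw [← Finset.sum_div, hdsum, div_self hbk]
  have hgsumself : ∀ ℓ, ∑ x, g ℓ ℓ x = t ℓ := by
    intro ℓ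
    simp [hg]
  have hgsum : ∀ ℓ k, k ≠ ℓ → ∑ x, g ℓ k x = if b k = 0 then 0 else 1 := by
    intro ℓ k hk
    simp only [hg, if_neg hk]
    exact hρsum k
  -- marginal computations for the product pieces
  have hm1' : ∀ ℓ k (j : Fin n), k ≠ ℓ →
      marg (prodT (g ℓ)) k j.castSucc = t ℓ * (if b k = 0 then 0 else d k j / b k) := by
    intro ℓ k j hk
    rw [marg_prodT]
    have hgkj : g ℓ k j.castSucc = if b k = 0 then 0 else d k j / b k := by
      simp only [hg, if_neg hk]; exact hρcs k j
    have hℓmem : ℓ ∈ univ.erase k := Finset.mem_erase.2 ⟨Ne.symm hk, Finset.mem_univ ℓ⟩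
    rw [← Finset.mul_prod_erase _ _ hℓmem, hgsumself]
    by_cases htℓ : t ℓ = 0
    · rw [htℓ]; ring
    · have hbne : ∀ i, i ≠ ℓ → b i ≠ 0 := by
        intro i hi hbi
        exact htℓ (hL1 i hbi ℓ (by exact fun h => hi (h ▸ rfl) ))
      have hprod : ∏ i ∈ (univ.erase k).erase ℓ, ∑ x, g ℓ i x = 1 := by
        apply Finset.prod_eq_one
        intro i hi
        have hiℓ : i ≠ ℓ := Finset.ne_of_mem_erase hi
        have hik : i ≠ k := Finset.ne_of_mem_erase (Finset.mem_of_mem_erase hi)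
        rw [hgsum ℓ i hiℓ, if_neg (hbne i hiℓ)]
      rw [hprod, hgkj, if_neg (hbne k hk)]
      ring
  have hm2' : ∀ k (j : Fin n), marg (prodT (g k)) k j.castSucc = 0 := by
    intro k j
    rw [marg_prodT]
    have : g k k j.castSucc = 0 := by
      simp only [hg, if_pos rfl]
      rw [if_neg (Fin.ne_of_lt (Fin.castSucc_lt_last j))]
    rw [this, zero_mul]
  have hm3' : ∀ ℓ k, k ≠ ℓ → marg (prodT (g ℓ)) k (Fin.last n) = 0 := by
    intro ℓ k hk
    rw [marg_prodT]
    have : g ℓ k (Fin.last n) = 0 := by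
      simp only [hg, if_neg hk]; exact hρlast k
    rw [this, zero_mul]
  have hm4' : ∀ k, marg (prodT (g k)) k (Fin.last n) = t k := by
    intro k
    rw [marg_prodT]
    have : g k k (Fin.last n) = t k := by simp [hg]
    rw [this]
    by_cases hall : ∀ i, i ≠ k → b i ≠ 0
    · have hprod : ∏ i ∈ univ.erase k, ∑ x, g k i x = 1 := by
        apply Finset.prod_eq_one
        intro i hi
        have hik : i ≠ k := Finset.ne_of_mem_erase hi
        rw [hgsum k i hik, if_neg (hall i hik)]
      rw [hprod, mul_one]
    · push_neg at hall
      obtain ⟨i, hik, hbi⟩ := hall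
      have htk : t k = 0 := hL1 i hbi k (fun h => hik (by rw [h]))
      rw [htk, zero_mul]
  refine ⟨Y, ⟨?_, ?_⟩, ?_⟩
  · -- nonnegativity
    intro u
    rw [hY]
    apply add_nonneg
    · rw [ext0]
      split
      · exact hX0 _
      · exact le_refl 0
    · apply Finset.sum_nonneg
      intro ℓ _
      apply Finset.prod_nonneg
      intro i _
      by_cases hi : i = ℓ
      · simp only [hg, if_pos hi]
        split
        · exact hi ▸ ht0 ℓ
        · exact le_refl 0
      · simp only [hg, if_neg hi]
        exact hρ0 i _
  · -- marginals
    intro k j'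
    rw [hY, marg_add, marg_sum]
    refine Fin.lastCases ?_ ?_ j'
    · rw [marg_ext0_last, zero_add]
      have : ∑ ℓ, marg (prodT (g ℓ)) k (Fin.last n) = t k := by
        rw [← Finset.add_sum_erase univ _ (Finset.mem_univ k), hm4']
        rw [Finset.sum_eq_zero (fun ℓ hℓ => hm3' ℓ k (Ne.symm (Finset.ne_of_mem_erase hℓ))), add_zero]
      rw [this]
      show t k = extMarg1 r s k (Fin.last n)
      simp only [extMarg1, Fin.snoc_last, ht, hM, hSr, hσ]
      rw [sub_div]
      ring
    · intro j
      rw [marg_ext0_castSucc]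
      have hsum : ∑ ℓ, marg (prodT (g ℓ)) k j.castSucc
          = if b k = 0 then 0 else d k j := by
        rw [← Finset.add_sum_erase univ _ (Finset.mem_univ k), hm2', zero_add]
        have : ∀ ℓ ∈ univ.erase k, marg (prodT (g ℓ)) k j.castSucc
            = t ℓ * (if b k = 0 then 0 else d k j / b k) := by
          intro ℓ hℓ
          exact hm1' ℓ k j (Ne.symm (Finset.ne_of_mem_erase hℓ))
        rw [Finset.sum_congr rfl this, ← Finset.sum_mul, htsum_erase]
        by_cases hbk : b k = 0
        · simp [hbk]
        · rw [if_neg hbk, if_neg hbk]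
          field_simp
      rw [hsum]
      have hgoal : marg X k j + (if b k = 0 then 0 else d k j) = r k j := by
        by_cases hbk : b k = 0
        · rw [if_pos hbk]
          have h5 : r k j - marg X k j = 0 := by simpa [hd] using hdzero k hbk j
          linarith
        · rw [if_neg hbk, hd]
          ring
      rw [hgoal]
      show r k j = extMarg1 r s k j.castSucc
      simp [extMarg1]
  · -- cost
    rw [hY, dot_add, dot_sum]
    have hz : ∀ ℓ, dot (extCost C A) (prodT (g ℓ)) = 0 := by
      intro ℓ
      apply Finset.sum_eq_zero
      intro u _
      by_cases hzero : prodT (g ℓ) u = 0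
      · rw [hzero, mul_zero]
      · have hne : ∀ i, g ℓ i (u i) ≠ 0 := by
          intro i
          intro h0
          exact hzero (Finset.prod_eq_zero (Finset.mem_univ i) h0)
        have huℓ : u ℓ = Fin.last n := by
          have := hne ℓ
          simp only [hg, if_pos rfl] at this
          by_contra h
          exact this (if_neg h)
        have huother : ∀ i, i ≠ ℓ → u i ≠ Fin.last n := by
          intro i hi h
          have := hne i
          simp only [hg, if_neg hi] at this
          exact this (h ▸ hρlast i)
        have hcost : extCost C A u = 0 := by
          rw [extCost, dif_neg]
          · have : nLast u = 1 := by
              unfold nLast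
              have : (univ.filter fun i => u i = Fin.last n) = {ℓ} := by
                ext i
                simp only [Finset.mem_filter, Finset.mem_univ, true_and, Finset.mem_singleton]
                constructor
                · intro h
                  by_contra hi
                  exact huother i hi h
                · intro h; rw [h]; exact huℓ
              rw [this, Finset.card_singleton]
            rw [this, hA1]
          · push_neg
            exact ⟨ℓ, huℓ⟩
        rw [hcost, zero_mul]
    rw [Finset.sum_eq_zero (fun ℓ _ => hz ℓ), add_zero]
    -- dot extCost ext0 = dot C X
    unfold dot
    rw [sum_emb]
    · exact Finset.sum_congr rfl fun v _ => by rw [extCost_emb, ext0_emb]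
    · intro u hu
      rw [ext0, dif_neg hu, mul_zero]

end MPA

namespace MPB
open MP
variable {m n : ℕ}

lemma A_nonneg {m : ℕ} (A : ℕ → ℝ) (hA1 : A 1 = 0)
    (hA : ∀ i, 1 ≤ i → i < m → A i < A (i + 1)) :
    ∀ i, 1 ≤ i → i ≤ m → 0 ≤ A i := by
  intro i h1 h2
  induction i with
  | zero => omega
  | succ k ih =>
    rcases Nat.eq_or_lt_of_le h1 with h | h
    · rw [← h, hA1]
    · have hk1 : 1 ≤ k := by omega
      have hkm : k < m := by omega
      have := hA k hk1 hkm
      have := ih hk1 (by omega)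
      linarith

lemma extCost_nonneg {m n : ℕ} (hm : 2 ≤ m) (C : (Fin m → Fin n) → ℝ) (hC : ∀ v, 0 ≤ C v)
    (A : ℕ → ℝ) (hA1 : A 1 = 0) (hA : ∀ i, 1 ≤ i → i < m → A i < A (i + 1)) :
    ∀ u, 0 ≤ extCost C A u := by
  intro u
  rw [extCost]
  split
  · exact hC _
  · next h =>
    exact A_nonneg A hA1 hA _ (one_le_nLast h) (nLast_le u)

theorem existsB (hm : 2 ≤ m)
    (C : (Fin m → Fin n) → ℝ) (hC : ∀ v, 0 ≤ C v)
    (r : Fin m → Fin n → ℝ)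
    (s : ℝ) (hs0 : 0 ≤ s)
    (A : ℕ → ℝ) (hA1 : A 1 = 0) (hA : ∀ i, 1 ≤ i → i < m → A i < A (i + 1))
    (Y : (Fin m → Fin (n+1)) → ℝ) (hY : Y ∈ PiEq (extMarg1 r s)) :
    ∃ X ∈ PiPartial r s, dot C X ≤ dot (extCost C A) Y := by
  classical
  obtain ⟨hY0, hYm⟩ := hY
  have hm1 : (0:ℝ) < (m:ℝ) - 1 := by
    have : (2:ℝ) ≤ (m:ℝ) := by exact_mod_cast hm
    linarith
  set σ : Fin m → ℝ := fun k => ∑ j, r k j with hσ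
  set Sr : ℝ := ∑ i, σ i with hSr
  set M : ℝ := (Sr - s) / ((m:ℝ) - 1) with hM
  have hMkey : ((m:ℝ) - 1) * M = Sr - s := by
    rw [hM]; field_simp
  have hmarg_last : ∀ k, marg Y k (Fin.last n) = M - σ k := by
    intro k
    rw [hYm k (Fin.last n)]
    simp only [extMarg1, Fin.snoc_last, hM, hSr, hσ]
    rw [sub_div]
    ring
  have hmarg_cs : ∀ k (j : Fin n), marg Y k j.castSucc = r k j := by
    intro k j
    rw [hYm k j.castSucc]
    simp [extMarg1]
  have k0 : Fin m := ⟨0, by omega⟩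
  have hT : ∑ u, Y u = M := by
    rw [← sum_marg Y k0, Fin.sum_univ_castSucc]
    have h1 : ∀ j : Fin n, marg Y k0 j.castSucc = r k0 j := hmarg_cs k0
    rw [Finset.sum_congr rfl (fun j _ => h1 j), hmarg_last]
    simp only [hσ]
    ring
  have hnlast : ∑ u : Fin m → Fin (n+1), (nLast u : ℝ) * Y u = (m:ℝ) * M - Sr := by
    have h1 : ∀ u : Fin m → Fin (n+1), (nLast u : ℝ) * Y u
        = ∑ k, if u k = Fin.last n then Y u else 0 := by
      intro u
      have : (nLast u : ℝ) = ∑ k, if u k = Fin.last n then (1:ℝ) else 0 := by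
        unfold nLast
        rw [Finset.card_filter]
        push_cast
        exact Finset.sum_congr rfl fun k _ => by split <;> simp
      rw [this, Finset.sum_mul]
      exact Finset.sum_congr rfl fun k _ => by split <;> simp
    rw [Finset.sum_congr rfl fun u _ => h1 u, Finset.sum_comm]
    have h2 : ∀ k : Fin m, (∑ u : Fin m → Fin (n+1), if u k = Fin.last n then Y u else 0)
        = M - σ k := fun k => hmarg_last k
    rw [Finset.sum_congr rfl fun k _ => h2 k]
    rw [Finset.sum_sub_distrib]
    simp [hSr]
  -- mass of the restriction
  set p : ℝ := ∑ v, restr Y v with hp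
  have hpY : p = ∑ u : Fin m → Fin (n+1),
      (if ∀ i, u i ≠ Fin.last n then Y u else 0) := by
    rw [hp]
    rw [sum_emb (fun u => if ∀ i, u i ≠ Fin.last n then Y u else 0)
      (fun u hu => if_neg hu)]
    exact Finset.sum_congr rfl fun v _ => by rw [if_pos (emb_allReal v)]; rfl
  have hsp : s ≤ p := by
    have key : ∑ u : Fin m → Fin (n+1), (1 - (nLast u : ℝ)) * Y u ≤ p := by
      rw [hpY]
      apply Finset.sum_le_sum
      intro u _
      by_cases h : ∀ i, u i ≠ Fin.last n
      · rw [if_pos h, nLast_eq_zero h]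
        simp
      · rw [if_neg h]
        have h1 : (1:ℝ) ≤ (nLast u : ℝ) := by exact_mod_cast one_le_nLast h
        have := hY0 u
        nlinarith
    have h2 : ∑ u : Fin m → Fin (n+1), (1 - (nLast u : ℝ)) * Y u = s := by
      have : ∀ u : Fin m → Fin (n+1), (1 - (nLast u : ℝ)) * Y u
          = Y u - (nLast u : ℝ) * Y u := fun u => by ring
      rw [Finset.sum_congr rfl fun u _ => this u, Finset.sum_sub_distrib, hT, hnlast]
      linarith [hMkey]
    linarith
  have hp0 : 0 ≤ p := Finset.sum_nonneg fun v _ => hY0 _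
  have hmargle : ∀ k j, marg (restr Y) k j ≤ marg Y k (Fin.castSucc j) := by
    intro k j
    have e1 : marg (restr Y) k j = ∑ u : Fin m → Fin (n+1),
        (if (∀ i, u i ≠ Fin.last n) ∧ u k = j.castSucc then Y u else 0) := by
      rw [marg, sum_emb (fun u => if (∀ i, u i ≠ Fin.last n) ∧ u k = j.castSucc then Y u else 0)
        (fun u hu => if_neg (fun hc => hu hc.1))]
      refine Finset.sum_congr rfl fun v _ => ?_
      have : (∀ i, emb v i ≠ Fin.last n) ∧ emb v k = j.castSucc ↔ v k = j := by
        constructor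
        · intro h
          have := h.2
          simpa [emb, Fin.castSucc_inj] using this
        · intro h
          exact ⟨emb_allReal v, by simp [emb, h]⟩
      by_cases h : v k = j
      · rw [if_pos (this.2 h), if_pos h]; rfl
      · rw [if_neg (fun hc => h (this.1 hc)), if_neg h]
    rw [e1, marg]
    apply Finset.sum_le_sum
    intro u _
    by_cases h : (∀ i, u i ≠ Fin.last n) ∧ u k = j.castSucc
    · rw [if_pos h, if_pos h.2]
    · rw [if_neg h]
      by_cases h2 : u k = j.castSucc
      · rw [if_pos h2]; exact hY0 u
      · rw [if_neg h2]
  have hdotle : dot C (restr Y) ≤ dot (extCost C A) Y := by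
    unfold dot
    have e1 : ∑ v, C v * restr Y v = ∑ u : Fin m → Fin (n+1),
        (if h : ∀ i, u i ≠ Fin.last n then C (fun i => (u i).castPred (h i)) * Y u else 0) := by
      rw [sum_emb (fun u => if h : ∀ i, u i ≠ Fin.last n
          then C (fun i => (u i).castPred (h i)) * Y u else 0)
        (fun u hu => dif_neg hu)]
      refine Finset.sum_congr rfl fun v _ => ?_
      rw [dif_pos (emb_allReal v)]
      have : (fun i => ((emb v) i).castPred (emb_allReal v i)) = v := by
        funext i; simp [emb]
      rw [this]; rfl
    rw [e1]
    apply Finset.sum_le_sum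
    intro u _
    by_cases h : ∀ i, u i ≠ Fin.last n
    · rw [dif_pos h, extCost, dif_pos h]
    · rw [dif_neg h]
      exact mul_nonneg (extCost_nonneg hm C hC A hA1 hA u) (hY0 u)
  by_cases hps : p = 0
  · -- then s = 0, take X = 0
    have hs0' : s = 0 := le_antisymm (hps ▸ hsp) hs0
    refine ⟨fun _ => 0, ⟨fun v => le_refl 0, ?_, ?_⟩, ?_⟩
    · intro k j
      have h1 : marg (fun _ => (0:ℝ)) k j = 0 := by
        apply Finset.sum_eq_zero; intro v _; split <;> rfl
      rw [h1]
      calc (0:ℝ) = marg (restr Y) k j - marg (restr Y) k j := by ring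
      _ ≤ r k j := by
        have hnn : 0 ≤ marg (restr Y) k j := marg_nonneg (fun v => hY0 _) k j
        have := (hmargle k j).trans_eq (hmarg_cs k j)
        linarith
    · rw [hs0']; exact Finset.sum_const_zero
    · have : dot C (fun _ => (0:ℝ)) = 0 := by
        apply Finset.sum_eq_zero; intro v _; exact mul_zero _
      rw [this]
      exact le_trans (dot_nonneg hC (fun v => hY0 _)) hdotle
  · have hppos : 0 < p := lt_of_le_of_ne hp0 (Ne.symm hps)
    have hsp1 : s / p ≤ 1 := by
      rw [div_le_one hppos]; exact hsp
    have hsp0 : 0 ≤ s / p := div_nonneg hs0 hp0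
    refine ⟨fun v => (s / p) * restr Y v, ⟨?_, ?_, ?_⟩, ?_⟩
    · intro v
      exact mul_nonneg hsp0 (hY0 _)
    · intro k j
      rw [marg_smul]
      have h1 : marg (restr Y) k j ≤ r k j := (hmargle k j).trans_eq (hmarg_cs k j)
      have h2 : 0 ≤ marg (restr Y) k j := marg_nonneg (fun v => hY0 _) k j
      nlinarith
    · rw [← Finset.mul_sum, ← hp, div_mul_cancel₀]
      exact hps
    · have h1 : dot C (fun v => (s / p) * restr Y v) = (s/p) * dot C (restr Y) := by
        unfold dot
        rw [Finset.mul_sum]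
        exact Finset.sum_congr rfl fun v _ => by ring
      rw [h1]
      have h2 : 0 ≤ dot C (restr Y) := dot_nonneg hC (fun v => hY0 _)
      nlinarith [hdotle]

end MPB

namespace MPC
open MP
variable {m n : ℕ}

lemma piPartial_nonempty (r : Fin m → Fin n → ℝ) (hr : ∀ k j, 0 ≤ r k j)
    (s : ℝ) (hs0 : 0 ≤ s) (hs : ∀ k, s ≤ ∑ j, r k j) :
    (PiPartial r s).Nonempty := by
  classical
  rcases eq_or_lt_of_le hs0 with h0 | h0
  · refine ⟨fun _ => 0, fun v => le_refl 0, ?_, by rw [← h0]; exact Finset.sum_const_zero⟩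
    intro k j
    have h1 : marg (fun _ => (0:ℝ)) k j = 0 := by
      apply Finset.sum_eq_zero; intro v _; split <;> rfl
    rw [h1]; exact hr k j
  · set σ : Fin m → ℝ := fun k => ∑ j, r k j with hσ
    have hσpos : ∀ k, 0 < σ k := fun k => lt_of_lt_of_le h0 (hs k)
    set g : Fin m → Fin n → ℝ := fun k j => r k j / σ k with hg
    have hgsum : ∀ k, ∑ j, g k j = 1 := by
      intro k
      simp only [hg]
      rw [← Finset.sum_div, div_self (hσpos k).ne']
    refine ⟨fun v => s * prodT g v, fun v => ?_, ?_, ?_⟩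
    · exact mul_nonneg h0.le (Finset.prod_nonneg fun i _ =>
        div_nonneg (hr i _) (hσpos i).le)
    · intro k j
      rw [marg_smul, marg_prodT]
      have h1 : ∏ i ∈ univ.erase k, ∑ x, g i x = 1 :=
        Finset.prod_eq_one fun i _ => hgsum i
      rw [h1, mul_one]
      simp only [hg]
      rw [mul_div_assoc']
      rw [div_le_iff₀ (hσpos k)]
      have := hs k
      have h2 : s * r k j ≤ σ k * r k j := mul_le_mul_of_nonneg_right (hs k) (hr k j)
      linarith [h2]
    · rw [← Finset.mul_sum, sum_prodT]
      rw [Finset.prod_congr rfl fun i _ => hgsum i]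
      simp

end MPC

/-- Theorem 3.1, first equivalent form: under the mass condition
`Σ_r ≥ (m−1)‖r_k‖₁ + s` for all `k`, the multimarginal partial optimal transport problem
equals the multimarginal optimal transport problem with extended marginals `r̄_k^{(1)}`
and extended cost `C̄^{(1)}` built from `0 = A_1 < A_2 < … < A_m`. -/
theorem mpot_equivalence_first_form {m n : ℕ} (hm : 2 ≤ m) (hn : 1 ≤ n)
    (C : (Fin m → Fin n) → ℝ) (hC : ∀ v, 0 ≤ C v)
    (r : Fin m → Fin n → ℝ) (hr : ∀ k j, 0 ≤ r k j)
    (s : ℝ) (hs0 : 0 ≤ s) (hs : ∀ k, s ≤ ∑ j, r k j)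
    (hcond : ∀ k, ((m : ℝ) - 1) * (∑ j, r k j) + s ≤ ∑ i, ∑ j, r i j)
    (A : ℕ → ℝ) (hA1 : A 1 = 0) (hA : ∀ i, 1 ≤ i → i < m → A i < A (i + 1)) :
    sInf ((fun X => dot C X) '' PiPartial r s)
      = sInf ((fun Y => dot (extCost C A) Y) '' PiEq (extMarg1 r s)) := by
  classical
  have hne1 : (PiPartial r s).Nonempty := MPC.piPartial_nonempty r hr s hs0 hs
  have hS1ne : ((fun X => dot C X) '' PiPartial r s).Nonempty := hne1.image _
  obtain ⟨X0, hX0⟩ := hne1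
  obtain ⟨Y0, hY0mem, hY0⟩ := MPA.existsA hm C r s hs hcond A hA1 X0 hX0
  have hS2ne : ((fun Y => dot (extCost C A) Y) '' PiEq (extMarg1 r s)).Nonempty :=
    ⟨_, ⟨Y0, hY0mem, rfl⟩⟩
  have hbdd1 : BddBelow ((fun X => dot C X) '' PiPartial r s) := by
    refine ⟨0, ?_⟩
    rintro a ⟨X, hX, rfl⟩
    exact MP.dot_nonneg hC hX.1
  have hbdd2 : BddBelow ((fun Y => dot (extCost C A) Y) '' PiEq (extMarg1 r s)) := by
    refine ⟨0, ?_⟩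
    rintro a ⟨Y, hY, rfl⟩
    exact MP.dot_nonneg (MPB.extCost_nonneg hm C hC A hA1 hA) hY.1
  apply le_antisymm
  · apply le_csInf hS2ne
    rintro a ⟨Y, hYmem, rfl⟩
    obtain ⟨X, hXmem, hle⟩ := MPB.existsB hm C hC r s hs0 A hA1 hA Y hYmem
    exact le_trans (csInf_le hbdd1 ⟨X, hXmem, rfl⟩) hle
  · apply le_csInf hS1ne
    rintro b ⟨X, hXmem, rfl⟩
    obtain ⟨Y, hYmem, heq⟩ := MPA.existsA hm C r s hs hcond A hA1 X hXmem
    show sInf _ ≤ dot C X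
    rw [← heq]
    exact csInf_le hbdd2 ⟨Y, hYmem, rfl⟩
end
end

section
/- Under the assumptions and constructions of the first equivalent form (condition Σ_r ≥ (m−1)‖r_k‖₁ + s for all k, extended marginals r̄_k^{(1)}, extended cost C̄^{(1)} with 0 = A_1 < A_2 < … < A_m), if X̄* is a minimizer of ⟨C̄^{(1)}, ·⟩ over Π(r̄_1^{(1)},…,r̄_m^{(1)}), then its restriction X* := X̄*_{[n]^m} to indices in [n]^m is an optimal solution of the multimarginal partial optimal transport problem min_{X ∈ Π^s(r_1,…,r_m)} ⟨C, X⟩. -/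
open Finset

noncomputable section

open MPOT

section Helpers

open Finset MPOT

variable {m n : ℕ}

lemma emb_ne_last (v : Fin m → Fin n) (i : Fin m) : emb v i ≠ Fin.last n :=
  (Fin.castSucc_lt_last (v i)).ne

lemma emb_inj : Function.Injective (emb (m := m) (n := n)) := by
  intro v w h
  funext i
  have := congrFun h i
  simpa [emb, Fin.castSucc_inj] using this

lemma sum_emb (f : (Fin m → Fin (n+1)) → ℝ)
    (hf : ∀ u : Fin m → Fin (n+1), (∃ i, u i = Fin.last n) → f u = 0) :
    ∑ u : Fin m → Fin (n+1), f u = ∑ v : Fin m → Fin n, f (emb v) := by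
  classical
  rw [← Finset.sum_image (f := f) (g := emb) (fun x _ y _ h => emb_inj h)]
  refine (Finset.sum_subset (Finset.subset_univ _) ?_).symm
  intro u _ hu
  refine hf u ?_
  by_contra hc
  push_neg at hc
  exact hu (Finset.mem_image.2 ⟨fun i => (u i).castPred (hc i), Finset.mem_univ _, by
    funext i; simp [emb, Fin.castSucc_castPred]⟩)

lemma sum_marg (X : (Fin m → Fin n) → ℝ) (k : Fin m) :
    ∑ j, marg X k j = ∑ v, X v := by
  unfold marg
  rw [Finset.sum_comm]
  refine Finset.sum_congr rfl fun v _ => ?_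
  simp

lemma nLast_le (u : Fin m → Fin (n+1)) : nLast u ≤ m := by
  classical
  simpa [nLast] using (Finset.card_filter_le univ fun ℓ => u ℓ = Fin.last n)

lemma nLast_cast (u : Fin m → Fin (n+1)) :
    (nLast u : ℝ) = ∑ k, if u k = Fin.last n then (1:ℝ) else 0 := by
  classical
  rw [nLast, Finset.card_filter]
  push_cast
  simp

lemma sum_nLast_mul (X : (Fin m → Fin (n+1)) → ℝ) :
    ∑ u, (nLast u : ℝ) * X u = ∑ k, marg X k (Fin.last n) := by
  classical
  calc ∑ u, (nLast u : ℝ) * X u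
      = ∑ u, ∑ k, (if u k = Fin.last n then X u else 0) := by
        refine Finset.sum_congr rfl fun u _ => ?_
        rw [nLast_cast, Finset.sum_mul]
        exact Finset.sum_congr rfl fun k _ => by
          by_cases h : u k = Fin.last n <;> simp [h]
    _ = ∑ k, marg X k (Fin.last n) := by rw [Finset.sum_comm]; rfl

end Helpers

section Extension

open Finset MPOT

variable {m n : ℕ} (r : Fin m → Fin n → ℝ) (s : ℝ) (X : (Fin m → Fin n) → ℝ)

/-- excess vector -/
def eV (ℓ : Fin m) (j : Fin n) : ℝ := r ℓ j - marg X ℓ j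

/-- total excess -/
def EV (ℓ : Fin m) : ℝ := ∑ j, eV r X ℓ j

/-- dummy masses -/
def dV (k : Fin m) : ℝ := ((∑ i, ∑ j, r i j) - s) / ((m : ℝ) - 1) - ∑ j, r k j

/-- normalized excess, with `0` in the last coordinate -/
def gV (ℓ : Fin m) : Fin (n + 1) → ℝ :=
  Fin.snoc (fun j => eV r X ℓ j / EV r X ℓ) 0

/-- the extension of `X` to `[n+1]^m` -/
def extT (u : Fin m → Fin (n + 1)) : ℝ :=
  (if h : ∀ i, u i ≠ Fin.last n then X (fun i => (u i).castPred (h i)) else 0)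
    + ∑ k, (if u k = Fin.last n then dV r s k else 0) *
        ∏ ℓ ∈ univ.erase k, gV r X ℓ (u ℓ)

variable {r s X}

lemma eV_nonneg (hX : X ∈ PiPartial r s) (ℓ : Fin m) (j : Fin n) : 0 ≤ eV r X ℓ j :=
  sub_nonneg.2 (hX.2.1 ℓ j)

lemma EV_nonneg (hX : X ∈ PiPartial r s) (ℓ : Fin m) : 0 ≤ EV r X ℓ :=
  Finset.sum_nonneg fun j _ => eV_nonneg hX ℓ j

lemma EV_eq (hX : X ∈ PiPartial r s) (ℓ : Fin m) : EV r X ℓ = (∑ j, r ℓ j) - s := by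
  unfold EV eV
  rw [Finset.sum_sub_distrib, sum_marg, hX.2.2]

lemma gV_nonneg (hX : X ∈ PiPartial r s) (ℓ : Fin m) (b : Fin (n+1)) : 0 ≤ gV r X ℓ b := by
  unfold gV
  refine Fin.lastCases ?_ ?_ b
  · simp
  · intro j
    rw [Fin.snoc_castSucc]
    exact div_nonneg (eV_nonneg hX ℓ j) (EV_nonneg hX ℓ)

lemma gV_last (ℓ : Fin m) : gV r X ℓ (Fin.last n) = 0 := by simp [gV]

lemma gV_sum (hE : EV r X ℓ ≠ 0) : ∑ b, gV r X ℓ b = 1 := by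
  rw [Fin.sum_univ_castSucc]
  simp only [gV, Fin.snoc_castSucc, Fin.snoc_last, add_zero]
  rw [← Finset.sum_div]
  exact div_self hE

lemma eV_eq_zero (hX : X ∈ PiPartial r s) (hE : EV r X ℓ = 0) (j : Fin n) :
    eV r X ℓ j = 0 :=
  (Finset.sum_eq_zero_iff_of_nonneg fun j _ => eV_nonneg hX ℓ j).1 hE j (mem_univ j)

lemma dV_nonneg (hm : 2 ≤ m)
    (hcond : ∀ k, ((m : ℝ) - 1) * (∑ j, r k j) + s ≤ ∑ i, ∑ j, r i j) (k : Fin m) :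
    0 ≤ dV r s k := by
  have h1 : (0:ℝ) < (m:ℝ) - 1 := by
    have : (2:ℝ) ≤ (m:ℝ) := by exact_mod_cast hm
    linarith
  unfold dV
  rw [sub_nonneg, le_div_iff₀ h1, mul_comm]
  linarith [hcond k]

lemma sum_dV (hm : 2 ≤ m) (hX : X ∈ PiPartial r s) (ℓ : Fin m) :
    ∑ k ∈ univ.erase ℓ, dV r s k = EV r X ℓ := by
  have hm1 : ((m:ℝ) - 1) ≠ 0 := by
    have : (2:ℝ) ≤ (m:ℝ) := by exact_mod_cast hm
    intro h; linarith
  rw [Finset.sum_erase_eq_sub (mem_univ ℓ), EV_eq hX]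
  unfold dV
  rw [Finset.sum_sub_distrib, Finset.sum_const, Finset.card_univ, Fintype.card_fin,
    nsmul_eq_mul]
  field_simp
  ring

lemma dV_prod_G (hm : 2 ≤ m) (hX : X ∈ PiPartial r s)
    (hcond : ∀ k, ((m : ℝ) - 1) * (∑ j, r k j) + s ≤ ∑ i, ∑ j, r i j)
    (k : Fin m) (t : Finset (Fin m)) (hk : k ∉ t) :
    dV r s k * ∏ ℓ ∈ t, (∑ b, gV r X ℓ b) = dV r s k := by
  by_cases h : ∀ ℓ ∈ t, EV r X ℓ ≠ 0
  · rw [Finset.prod_congr rfl fun ℓ hℓ => gV_sum (h ℓ hℓ), Finset.prod_const_one, mul_one]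
  · push_neg at h
    obtain ⟨ℓ, hℓt, hE⟩ := h
    have hsum : ∑ k' ∈ univ.erase ℓ, dV r s k' = 0 := by rw [sum_dV hm hX]; exact hE
    have hd0 : dV r s k = 0 :=
      (Finset.sum_eq_zero_iff_of_nonneg fun k' _ => dV_nonneg hm hcond k').1 hsum k
        (Finset.mem_erase.2 ⟨fun hkl => hk (hkl ▸ hℓt), mem_univ k⟩)
    simp [hd0]

end Extension

section Slice

open Finset MPOT

variable {m n : ℕ} {r : Fin m → Fin n → ℝ} {s : ℝ} {X : (Fin m → Fin n) → ℝ}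

lemma slice_sum (hm : 2 ≤ m) (hX : X ∈ PiPartial r s)
    (hcond : ∀ k, ((m : ℝ) - 1) * (∑ j, r k j) + s ≤ ∑ i, ∑ j, r i j)
    (k k' : Fin m) (j : Fin (n+1)) :
    (∑ u : Fin m → Fin (n+1), if u k' = j then
        (if u k = Fin.last n then dV r s k else 0) * ∏ ℓ ∈ univ.erase k, gV r X ℓ (u ℓ)
      else 0)
    = if k = k' then (if j = Fin.last n then dV r s k else 0)
      else dV r s k * gV r X k' j := by
  classical
  set F : Fin m → Fin (n+1) → ℝ := fun ℓ b =>
    (if ℓ = k' then (if b = j then 1 else 0) else 1) *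
    (if ℓ = k then (if b = Fin.last n then dV r s k else 0) else gV r X ℓ b) with hF
  have hFu : ∀ u : Fin m → Fin (n+1),
      (if u k' = j then
        (if u k = Fin.last n then dV r s k else 0) * ∏ ℓ ∈ univ.erase k, gV r X ℓ (u ℓ)
      else 0) = ∏ ℓ, F ℓ (u ℓ) := by
    intro u
    rw [hF]
    simp only
    rw [Finset.prod_mul_distrib]
    rw [Finset.prod_ite_eq' univ k' (fun ℓ => if u ℓ = j then (1:ℝ) else 0)]
    rw [← Finset.mul_prod_erase univ
      (fun ℓ => if ℓ = k then (if u ℓ = Fin.last n then dV r s k else 0) else gV r X ℓ (u ℓ))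
      (mem_univ k)]
    simp only [if_pos rfl, mem_univ, if_true]
    rw [Finset.prod_congr rfl fun ℓ hℓ => if_neg (Finset.mem_erase.1 hℓ).1]
    rw [boole_mul]
  rw [Finset.sum_congr rfl fun u _ => hFu u, ← Fintype.prod_sum]
  rcases eq_or_ne k k' with rfl | hkk'
  · rw [if_pos rfl]
    rw [← Finset.mul_prod_erase univ (fun ℓ => ∑ b, F ℓ b) (mem_univ k)]
    have h1 : ∑ b, F k b = if j = Fin.last n then dV r s k else 0 := by
      simp only [hF, eq_self_iff_true, if_true]
      rw [Finset.sum_congr rfl fun b _ => boole_mul (b = j) _]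
      rw [Finset.sum_ite_eq' univ j (fun b => if b = Fin.last n then dV r s k else 0)]
      simp
    have h2 : ∀ ℓ ∈ univ.erase k, (∑ b, F ℓ b) = ∑ b, gV r X ℓ b := by
      intro ℓ hℓ
      refine Finset.sum_congr rfl fun b _ => ?_
      simp [hF, (Finset.mem_erase.1 hℓ).1]
    rw [h1, Finset.prod_congr rfl h2]
    by_cases hj : j = Fin.last n
    · rw [if_pos hj]
      exact dV_prod_G hm hX hcond k _ (Finset.notMem_erase k univ)
    · simp [hj]
  · rw [if_neg hkk']
    have hk'mem : k' ∈ univ.erase k := Finset.mem_erase.2 ⟨Ne.symm hkk', mem_univ _⟩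
    rw [← Finset.mul_prod_erase univ (fun ℓ => ∑ b, F ℓ b) (mem_univ k),
      ← Finset.mul_prod_erase (univ.erase k) (fun ℓ => ∑ b, F ℓ b) hk'mem]
    have h1 : ∑ b, F k b = dV r s k := by
      simp only [hF, eq_self_iff_true, if_true, if_neg hkk', one_mul]
      rw [Finset.sum_ite_eq' univ (Fin.last n) (fun _ => dV r s k)]
      simp
    have h2 : ∑ b, F k' b = gV r X k' j := by
      simp only [hF, eq_self_iff_true, if_true, if_neg (Ne.symm hkk')]
      rw [Finset.sum_congr rfl fun b _ => boole_mul (b = j) _]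
      rw [Finset.sum_ite_eq' univ j (gV r X k')]
      simp
    have h3 : ∀ ℓ ∈ (univ.erase k).erase k', (∑ b, F ℓ b) = ∑ b, gV r X ℓ b := by
      intro ℓ hℓ
      have h1' := (Finset.mem_erase.1 hℓ).1
      have h2' := (Finset.mem_erase.1 (Finset.mem_of_mem_erase hℓ)).1
      refine Finset.sum_congr rfl fun b _ => ?_
      simp [hF, h1', h2']
    rw [h1, h2, Finset.prod_congr rfl h3, mul_left_comm,
      dV_prod_G hm hX hcond k _ (fun h => (Finset.notMem_erase k univ) (Finset.mem_of_mem_erase h)),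
      mul_comm]

end Slice

section MargExt

open Finset MPOT

variable {m n : ℕ} {r : Fin m → Fin n → ℝ} {s : ℝ} {X : (Fin m → Fin n) → ℝ}

lemma marg_extT (hm : 2 ≤ m) (hX : X ∈ PiPartial r s)
    (hcond : ∀ k, ((m : ℝ) - 1) * (∑ j, r k j) + s ≤ ∑ i, ∑ j, r i j)
    (k' : Fin m) (j : Fin (n+1)) :
    marg (extT r s X) k' j = extMarg1 r s k' j := by
  classical
  have key : ∀ u : Fin m → Fin (n + 1), (if u k' = j then extT r s X u else 0) =
      (if u k' = j then
        (if h : ∀ i, u i ≠ Fin.last n then X (fun i => (u i).castPred (h i)) else 0) else 0)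
      + ∑ k, (if u k' = j then
          (if u k = Fin.last n then dV r s k else 0) * ∏ ℓ ∈ univ.erase k, gV r X ℓ (u ℓ)
        else 0) := by
    intro u
    by_cases hc : u k' = j
    · simp only [extT, if_pos hc]
    · simp only [if_neg hc, Finset.sum_const_zero, add_zero]
  unfold marg
  rw [Finset.sum_congr rfl fun u _ => key u, Finset.sum_add_distrib, Finset.sum_comm,
    Finset.sum_congr rfl fun k _ => slice_sum hm hX hcond k k' j]
  induction j using Fin.lastCases with
  | last =>
    have hPA : (∑ u : Fin m → Fin (n+1), if u k' = Fin.last n then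
        (if h : ∀ i, u i ≠ Fin.last n then X (fun i => (u i).castPred (h i)) else 0) else 0) = 0 := by
      refine Finset.sum_eq_zero fun u _ => ?_
      by_cases hc : u k' = Fin.last n
      · rw [if_pos hc, dif_neg]
        push_neg
        exact ⟨k', hc⟩
      · rw [if_neg hc]
    rw [hPA, zero_add]
    have hterm : ∀ k : Fin m, (if k = k' then (if Fin.last n = Fin.last n then dV r s k else 0)
        else dV r s k * gV r X k' (Fin.last n)) = if k = k' then dV r s k else 0 := by
      intro k
      by_cases hk : k = k' <;> simp [hk, gV_last]
    rw [Finset.sum_congr rfl fun k _ => hterm k,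
      Finset.sum_ite_eq' univ k' (dV r s)]
    simp only [mem_univ, if_true]
    simp only [extMarg1, Fin.snoc_last]
    unfold dV
    rw [sub_div]
    ring
  | cast j₀ =>
    have hPA : (∑ u : Fin m → Fin (n+1), if u k' = Fin.castSucc j₀ then
        (if h : ∀ i, u i ≠ Fin.last n then X (fun i => (u i).castPred (h i)) else 0) else 0)
        = marg X k' j₀ := by
      rw [sum_emb _ ?_]
      · unfold marg
        refine Finset.sum_congr rfl fun v _ => ?_
        by_cases hv : v k' = j₀
        · rw [if_pos (show emb v k' = Fin.castSucc j₀ by simp [emb, hv]),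
            dif_pos (emb_ne_last v), if_pos hv]
          exact congrArg X (funext fun i => by simp [emb])
        · rw [if_neg (by simp [emb, Fin.castSucc_inj, hv]), if_neg hv]
      · rintro u ⟨i, hi⟩
        by_cases hc : u k' = Fin.castSucc j₀
        · rw [if_pos hc, dif_neg (by push_neg; exact ⟨i, hi⟩)]
        · rw [if_neg hc]
    rw [hPA]
    have hterm : ∀ k : Fin m, (if k = k' then (if Fin.castSucc j₀ = Fin.last n then dV r s k else 0)
        else dV r s k * gV r X k' (Fin.castSucc j₀))
        = if k = k' then 0 else dV r s k * gV r X k' (Fin.castSucc j₀) := by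
      intro k
      by_cases hk : k = k'
      · rw [if_pos hk, if_pos hk, if_neg (Fin.castSucc_lt_last j₀).ne]
      · rw [if_neg hk, if_neg hk]
    rw [Finset.sum_congr rfl fun k _ => hterm k,
      ← Finset.add_sum_erase univ _ (mem_univ k'), if_pos rfl, zero_add,
      Finset.sum_congr rfl fun k hk => if_neg (Finset.mem_erase.1 hk).1,
      ← Finset.sum_mul, sum_dV hm hX k']
    simp only [extMarg1, Fin.snoc_castSucc, gV]
    by_cases hE : EV r X k' = 0
    · have he := eV_eq_zero hX hE j₀
      rw [hE, zero_mul, add_zero]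
      unfold eV at he
      linarith
    · rw [mul_comm, div_mul_cancel₀ _ hE]
      unfold eV
      ring

end MargExt

section Cost

open Finset MPOT

variable {m n : ℕ} {r : Fin m → Fin n → ℝ} {s : ℝ} {X : (Fin m → Fin n) → ℝ}

lemma extT_nonneg (hm : 2 ≤ m) (hX : X ∈ PiPartial r s)
    (hcond : ∀ k, ((m : ℝ) - 1) * (∑ j, r k j) + s ≤ ∑ i, ∑ j, r i j)
    (u : Fin m → Fin (n+1)) : 0 ≤ extT r s X u := by
  unfold extT
  refine add_nonneg ?_ (Finset.sum_nonneg fun k _ => mul_nonneg ?_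
    (Finset.prod_nonneg fun ℓ _ => gV_nonneg hX ℓ _))
  · by_cases h : ∀ i, u i ≠ Fin.last n
    · rw [dif_pos h]; exact hX.1 _
    · rw [dif_neg h]
  · by_cases hk : u k = Fin.last n <;> simp [hk, dV_nonneg hm hcond k]

lemma extT_mem (hm : 2 ≤ m) (hX : X ∈ PiPartial r s)
    (hcond : ∀ k, ((m : ℝ) - 1) * (∑ j, r k j) + s ≤ ∑ i, ∑ j, r i j) :
    extT r s X ∈ PiEq (extMarg1 r s) :=
  ⟨extT_nonneg hm hX hcond, marg_extT hm hX hcond⟩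

lemma extCost_emb (C : (Fin m → Fin n) → ℝ) (A : ℕ → ℝ) (v : Fin m → Fin n) :
    extCost C A (emb v) = C v := by
  simp only [extCost]
  rw [dif_pos (emb_ne_last v)]
  exact congrArg C (funext fun i => by simp [emb])

lemma nLast_pos (u : Fin m → Fin (n+1)) (i : Fin m) (hi : u i = Fin.last n) :
    1 ≤ nLast u :=
  Finset.card_pos.2 ⟨i, Finset.mem_filter.2 ⟨mem_univ _, hi⟩⟩

lemma extT_eq_zero (h2 : 2 ≤ nLast u) : extT r s X u = 0 := by
  classical
  have hnall : ¬ ∀ i, u i ≠ Fin.last n := by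
    intro h
    have : (univ.filter fun ℓ => u ℓ = Fin.last n) = ∅ :=
      Finset.filter_eq_empty_iff.2 fun {x} _ => h x
    have : nLast u = 0 := by rw [nLast, this, Finset.card_empty]
    omega
  unfold extT
  rw [dif_neg hnall, zero_add]
  refine Finset.sum_eq_zero fun k _ => ?_
  by_cases hk : u k = Fin.last n
  · obtain ⟨a, ha, b, hb, hab⟩ := Finset.one_lt_card.1 (by omega : 1 < nLast u)
    have hamem := (Finset.mem_filter.1 ha).2
    have hbmem := (Finset.mem_filter.1 hb).2
    obtain ⟨ℓ, hℓlast, hℓk⟩ : ∃ ℓ, u ℓ = Fin.last n ∧ ℓ ≠ k := by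
      rcases eq_or_ne a k with rfl | hak
      · exact ⟨b, hbmem, Ne.symm hab⟩
      · exact ⟨a, hamem, hak⟩
    rw [Finset.prod_eq_zero (Finset.mem_erase.2 ⟨hℓk, mem_univ _⟩)
      (show gV r X ℓ (u ℓ) = 0 by rw [hℓlast]; exact gV_last ℓ), mul_zero]
  · rw [if_neg hk, zero_mul]

lemma dot_extT (hm : 2 ≤ m) (hX : X ∈ PiPartial r s)
    (hcond : ∀ k, ((m : ℝ) - 1) * (∑ j, r k j) + s ≤ ∑ i, ∑ j, r i j)
    (C : (Fin m → Fin n) → ℝ) (A : ℕ → ℝ) (hA1 : A 1 = 0) :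
    dot (extCost C A) (extT r s X) = dot C X := by
  classical
  unfold dot
  rw [sum_emb (fun u => extCost C A u * extT r s X u) ?_]
  · refine Finset.sum_congr rfl fun v _ => ?_
    rw [extCost_emb]
    congr 1
    unfold extT
    rw [dif_pos (emb_ne_last v),
      Finset.sum_eq_zero (fun k _ => by rw [if_neg (emb_ne_last v k), zero_mul]), add_zero]
    exact congrArg X (funext fun i => by simp [emb])
  · rintro u ⟨i, hi⟩
    have h1 : 1 ≤ nLast u := nLast_pos u i hi
    rcases eq_or_lt_of_le h1 with h1' | h2
    · have hc : extCost C A u = 0 := by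
        simp only [extCost]
        rw [dif_neg (by push_neg; exact ⟨i, hi⟩), ← h1', hA1]
      show extCost C A u * extT r s X u = 0
      rw [hc, zero_mul]
    · show extCost C A u * extT r s X u = 0
      rw [extT_eq_zero h2, mul_zero]

end Cost

section Swap

open Finset MPOT

variable {m n : ℕ}

lemma mass_identity (hm : 2 ≤ m) (r : Fin m → Fin n → ℝ) (s : ℝ)
    (Xb : (Fin m → Fin (n+1)) → ℝ) (hmem : Xb ∈ PiEq (extMarg1 r s)) :
    ∑ u, (nLast u : ℝ) * Xb u = (∑ u, Xb u) - s := by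
  have hm1 : ((m:ℝ) - 1) ≠ 0 := by
    have : (2:ℝ) ≤ (m:ℝ) := by exact_mod_cast hm
    intro h; linarith
  have k0 : Fin m := ⟨0, by omega⟩
  have hT : ∑ u, Xb u = (∑ i, ∑ j, r i j) / ((m:ℝ)-1) - s/((m:ℝ)-1) := by
    rw [← sum_marg Xb k0, Finset.sum_congr rfl fun j _ => hmem.2 k0 j,
      Fin.sum_univ_castSucc]
    simp only [extMarg1, Fin.snoc_castSucc, Fin.snoc_last]
    ring
  rw [sum_nLast_mul, Finset.sum_congr rfl fun k _ => hmem.2 k (Fin.last n), hT]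
  simp only [extMarg1, Fin.snoc_last]
  rw [Finset.sum_sub_distrib, Finset.sum_sub_distrib, Finset.sum_const, Finset.sum_const,
    Finset.card_univ, Fintype.card_fin, nsmul_eq_mul, nsmul_eq_mul]
  field_simp
  ring

lemma marg_combo (Xb : (Fin m → Fin n) → ℝ) (ε : ℝ) (u1 w1 u0 w : Fin m → Fin n)
    (k : Fin m) (j : Fin n) :
    marg (fun v => Xb v + ε * (((if v = u1 then 1 else 0) + (if v = w1 then 1 else 0))
      - ((if v = u0 then 1 else 0) + (if v = w then 1 else 0)))) k j
    = marg Xb k j + ε * (((if u1 k = j then 1 else 0) + (if w1 k = j then 1 else 0))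
      - ((if u0 k = j then 1 else 0) + (if w k = j then 1 else 0))) := by
  classical
  have hind : ∀ a : Fin m → Fin n,
      (∑ v : Fin m → Fin n, if v k = j then (if v = a then (1:ℝ) else 0) else 0)
      = (if a k = j then 1 else 0) := by
    intro a
    rw [Finset.sum_congr rfl fun v _ =>
      show (if v k = j then (if v = a then (1:ℝ) else 0) else 0)
        = (if v = a then (if a k = j then (1:ℝ) else 0) else 0) from by
        rcases eq_or_ne v a with rfl | h
        · simp
        · simp [h]]
    simp [Finset.sum_ite_eq']
  unfold marg
  calc (∑ v : Fin m → Fin n, if v k = j then Xb v + ε * (((if v = u1 then 1 else 0)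
          + (if v = w1 then 1 else 0)) - ((if v = u0 then 1 else 0) + (if v = w then 1 else 0)))
        else 0)
      = ∑ v : Fin m → Fin n, ((if v k = j then Xb v else 0)
          + ε * (((if v k = j then (if v = u1 then 1 else 0) else 0)
              + (if v k = j then (if v = w1 then 1 else 0) else 0))
            - ((if v k = j then (if v = u0 then 1 else 0) else 0)
              + (if v k = j then (if v = w then 1 else 0) else 0)))) := by
        refine Finset.sum_congr rfl fun v _ => ?_
        by_cases h : v k = j <;> simp [h]
    _ = _ := by
        rw [Finset.sum_add_distrib, ← Finset.mul_sum, Finset.sum_sub_distrib,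
          Finset.sum_add_distrib, Finset.sum_add_distrib, hind, hind, hind, hind]

lemma dot_combo (Cb Xb : (Fin m → Fin n) → ℝ) (ε : ℝ) (u1 w1 u0 w : Fin m → Fin n) :
    dot Cb (fun v => Xb v + ε * (((if v = u1 then 1 else 0) + (if v = w1 then 1 else 0))
      - ((if v = u0 then 1 else 0) + (if v = w then 1 else 0))))
    = dot Cb Xb + ε * ((Cb u1 + Cb w1) - (Cb u0 + Cb w)) := by
  classical
  have hind : ∀ a : Fin m → Fin n,
      (∑ v : Fin m → Fin n, Cb v * (if v = a then (1:ℝ) else 0)) = Cb a := by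
    intro a
    rw [Finset.sum_congr rfl fun v _ =>
      show Cb v * (if v = a then (1:ℝ) else 0) = (if v = a then Cb a else 0) from by
        rcases eq_or_ne v a with rfl | h
        · simp
        · simp [h]]
    simp [Finset.sum_ite_eq']
  unfold dot
  calc (∑ v : Fin m → Fin n, Cb v * (Xb v + ε * (((if v = u1 then 1 else 0)
          + (if v = w1 then 1 else 0)) - ((if v = u0 then 1 else 0) + (if v = w then 1 else 0)))))
      = ∑ v : Fin m → Fin n, (Cb v * Xb v
          + ε * (((Cb v * if v = u1 then 1 else 0) + (Cb v * if v = w1 then 1 else 0))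
            - ((Cb v * if v = u0 then 1 else 0) + (Cb v * if v = w then 1 else 0)))) := by
        refine Finset.sum_congr rfl fun v _ => ?_
        ring
    _ = _ := by
        rw [Finset.sum_add_distrib, ← Finset.mul_sum, Finset.sum_sub_distrib,
          Finset.sum_add_distrib, Finset.sum_add_distrib, hind, hind, hind, hind]

end Swap

section NoHigh

open Finset MPOT

variable {m n : ℕ}

lemma no_high_mass (hm : 2 ≤ m) (C : (Fin m → Fin n) → ℝ) (hC : ∀ v, 0 ≤ C v)
    (r : Fin m → Fin n → ℝ) (s : ℝ) (hs0 : 0 ≤ s)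
    (A : ℕ → ℝ) (hA1 : A 1 = 0) (hA : ∀ i, 1 ≤ i → i < m → A i < A (i + 1))
    (Xb : (Fin m → Fin (n + 1)) → ℝ) (hmem : Xb ∈ PiEq (extMarg1 r s))
    (hopt : ∀ Y ∈ PiEq (extMarg1 r s), dot (extCost C A) Xb ≤ dot (extCost C A) Y)
    (u0 : Fin m → Fin (n+1)) (h2 : 2 ≤ nLast u0) : Xb u0 = 0 := by
  classical
  by_contra hne
  have hpos : 0 < Xb u0 := lt_of_le_of_ne (hmem.1 u0) (Ne.symm hne)
  have hid := mass_identity hm r s Xb hmem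
  -- find a point `w` of `T_∅` with positive mass
  have hlt : ∑ u, (if nLast u = 0 then (0:ℝ) else Xb u) < ∑ u, (nLast u : ℝ) * Xb u := by
    refine Finset.sum_lt_sum (fun u _ => ?_) ⟨u0, mem_univ _, ?_⟩
    · by_cases h0 : nLast u = 0
      · simp [h0]
      · have h1 : 1 ≤ nLast u := Nat.one_le_iff_ne_zero.2 h0
        rw [if_neg h0]
        calc Xb u = 1 * Xb u := (one_mul _).symm
          _ ≤ (nLast u : ℝ) * Xb u := by
            apply mul_le_mul_of_nonneg_right _ (hmem.1 u)
            exact_mod_cast h1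
    · rw [if_neg (by omega)]
      have hc2 : (2:ℝ) ≤ (nLast u0 : ℝ) := by exact_mod_cast h2
      nlinarith
  have hsplit : ∑ u, (if nLast u = 0 then (0:ℝ) else Xb u)
      = (∑ u, Xb u) - ∑ u, (if nLast u = 0 then Xb u else 0) := by
    rw [eq_sub_iff_add_eq, ← Finset.sum_add_distrib]
    exact Finset.sum_congr rfl fun u _ => by by_cases h : nLast u = 0 <;> simp [h]
  have hwpos : 0 < ∑ u, (if nLast u = 0 then Xb u else 0) := by
    rw [hsplit, hid] at hlt
    linarith
  obtain ⟨w, _, hw0⟩ := Finset.exists_ne_zero_of_sum_ne_zero (ne_of_gt hwpos)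
  have hwz : nLast w = 0 := by
    by_contra h
    simp [h] at hw0
  rw [if_pos hwz] at hw0
  have hwposX : 0 < Xb w := lt_of_le_of_ne (hmem.1 w) (Ne.symm hw0)
  have hwlast : ∀ i, w i ≠ Fin.last n := by
    intro i hi
    have := nLast_pos w i hi
    omega
  -- choose the swap coordinates
  obtain ⟨k, hk, b, hb, hkb⟩ := Finset.one_lt_card.1
    (show 1 < (univ.filter fun ℓ => u0 ℓ = Fin.last n).card from lt_of_lt_of_le one_lt_two h2)
  have hku : u0 k = Fin.last n := (Finset.mem_filter.1 hk).2
  have hbu : u0 b = Fin.last n := (Finset.mem_filter.1 hb).2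
  set u1 : Fin m → Fin (n+1) := Function.update u0 k (w k) with hu1def
  set w1 : Fin m → Fin (n+1) := Function.update w k (Fin.last n) with hw1def
  set ε : ℝ := min (Xb u0) (Xb w) with hεdef
  have hεpos : 0 < ε := lt_min hpos hwposX
  have hu1k : u1 k = w k := Function.update_self k (w k) u0
  have hu1b : u1 b = Fin.last n := by
    rw [hu1def, Function.update_of_ne (Ne.symm hkb)]; exact hbu
  have hw1k : w1 k = Fin.last n := Function.update_self k (Fin.last n) w
  have hw1b : w1 b = w b := by rw [hw1def, Function.update_of_ne (Ne.symm hkb)]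
  have hwk : w k ≠ Fin.last n := hwlast k
  have d_u1_u0 : u1 ≠ u0 := by
    intro h; apply hwk; rw [← hu1k, h, hku]
  have d_u1_w : u1 ≠ w := by
    intro h; apply hwlast b; rw [← h]; exact hu1b
  have d_w1_u0 : w1 ≠ u0 := by
    intro h; apply hwlast b; rw [← hw1b, h]; exact hbu
  have d_w1_w : w1 ≠ w := by
    intro h; apply hwk; rw [← h]; exact hw1k
  have d_u0_w : u0 ≠ w := by
    intro h; apply hwk; rw [← h]; exact hku
  have d_u1_w1 : u1 ≠ w1 := by
    intro h; apply hwlast b; rw [← hw1b, ← h]; exact hu1b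
  set Y : (Fin m → Fin (n+1)) → ℝ := fun v => Xb v
    + ε * (((if v = u1 then 1 else 0) + (if v = w1 then 1 else 0))
      - ((if v = u0 then 1 else 0) + (if v = w then 1 else 0))) with hYdef
  have hY0 : ∀ v, 0 ≤ Y v := by
    intro v
    rcases eq_or_ne v u0 with hv0 | hv0
    · subst hv0
      have h1 : Y v = Xb v - ε := by
        simp only [hYdef]
        rw [if_neg (Ne.symm d_u1_u0), if_neg (Ne.symm d_w1_u0), if_neg d_u0_w]
        norm_num
        ring
      rw [h1, sub_nonneg]
      exact min_le_left _ _
    rcases eq_or_ne v w with hvw | hvw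
    · subst hvw
      have h1 : Y v = Xb v - ε := by
        simp only [hYdef]
        rw [if_neg (Ne.symm d_u1_w), if_neg (Ne.symm d_w1_w), if_neg (Ne.symm d_u0_w)]
        norm_num
        ring
      rw [h1, sub_nonneg]
      exact min_le_right _ _
    · have h1 : Y v = Xb v + ε * ((if v = u1 then 1 else 0) + (if v = w1 then 1 else 0)) := by
        simp only [hYdef]
        rw [if_neg hv0, if_neg hvw]
        ring
      rw [h1]
      refine add_nonneg (hmem.1 v) (mul_nonneg hεpos.le (add_nonneg ?_ ?_)) <;>
        · split <;> norm_num
  have hYm : ∀ k' j, marg Y k' j = extMarg1 r s k' j := by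
    intro k' j
    rw [hYdef, marg_combo]
    have hcoord : ((if u1 k' = j then (1:ℝ) else 0) + (if w1 k' = j then 1 else 0))
        - ((if u0 k' = j then 1 else 0) + (if w k' = j then 1 else 0)) = 0 := by
      rcases eq_or_ne k' k with rfl | hk'
      · rw [hu1k, hw1k, hku]; ring
      · rw [show u1 k' = u0 k' from Function.update_of_ne hk' _ _,
          show w1 k' = w k' from Function.update_of_ne hk' _ _]
        ring
    rw [hcoord, mul_zero, add_zero]
    exact hmem.2 k' j
  have hYmem : Y ∈ PiEq (extMarg1 r s) := ⟨hY0, hYm⟩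
  -- cost values
  have hCu0 : extCost C A u0 = A (nLast u0) := by
    simp only [extCost]
    rw [dif_neg (by push_neg; exact ⟨k, hku⟩)]
  have hfilter_u1 : (univ.filter fun ℓ => u1 ℓ = Fin.last n)
      = (univ.filter fun ℓ => u0 ℓ = Fin.last n).erase k := by
    ext v
    simp only [Finset.mem_erase, Finset.mem_filter, mem_univ, true_and]
    rcases eq_or_ne v k with rfl | hv
    · simp [hu1k, hwk]
    · rw [show u1 v = u0 v from Function.update_of_ne hv _ _]
      simp [hv]
  have hnu1 : nLast u1 = nLast u0 - 1 := by
    rw [nLast, hfilter_u1, Finset.card_erase_of_mem hk]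
    rfl
  have hCu1 : extCost C A u1 = A (nLast u0 - 1) := by
    simp only [extCost]
    rw [dif_neg (by push_neg; exact ⟨b, hu1b⟩), hnu1]
  have hfw1 : (univ.filter fun ℓ => w1 ℓ = Fin.last n) = {k} := by
    ext v
    simp only [Finset.mem_filter, mem_univ, true_and, Finset.mem_singleton]
    rcases eq_or_ne v k with rfl | hv
    · simp [hw1k]
    · rw [show w1 v = w v from Function.update_of_ne hv _ _]
      simp [hv, hwlast v]
  have hCw1 : extCost C A w1 = 0 := by
    simp only [extCost]
    rw [dif_neg (by push_neg; exact ⟨k, hw1k⟩),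
      show nLast w1 = 1 from by rw [nLast, hfw1, Finset.card_singleton], hA1]
  have hCw : 0 ≤ extCost C A w := by
    simp only [extCost]
    rw [dif_pos hwlast]
    exact hC _
  have hAlt : A (nLast u0 - 1) < A (nLast u0) := by
    have hle := nLast_le u0
    have h := hA (nLast u0 - 1) (by omega) (by omega)
    rwa [Nat.sub_add_cancel (by omega)] at h
  have hfinal := hopt Y hYmem
  rw [hYdef, dot_combo, hCu0, hCu1, hCw1] at hfinal
  have hΔ : (A (nLast u0 - 1) + 0) - (A (nLast u0) + extCost C A w) < 0 := by linarith
  nlinarith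

end NoHigh

/-- Theorem 3.1, first equivalent form, minimizer part: under the mass
condition `Σ_r ≥ (m−1)‖r_k‖₁ + s` for all `k`, if `Xb` minimizes `⟨C̄^{(1)}, ·⟩` over
`Π(r̄_1^{(1)}, …, r̄_m^{(1)})`, then its restriction to `[n]^m` is an optimal solution of
the multimarginal partial optimal transport problem. -/
theorem mpot_first_form_minimizer {m n : ℕ} (hm : 2 ≤ m) (hn : 1 ≤ n)
    (C : (Fin m → Fin n) → ℝ) (hC : ∀ v, 0 ≤ C v)
    (r : Fin m → Fin n → ℝ) (hr : ∀ k j, 0 ≤ r k j)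
    (s : ℝ) (hs0 : 0 ≤ s) (hs : ∀ k, s ≤ ∑ j, r k j)
    (hcond : ∀ k, ((m : ℝ) - 1) * (∑ j, r k j) + s ≤ ∑ i, ∑ j, r i j)
    (A : ℕ → ℝ) (hA1 : A 1 = 0) (hA : ∀ i, 1 ≤ i → i < m → A i < A (i + 1))
    (Xb : (Fin m → Fin (n + 1)) → ℝ) (hmem : Xb ∈ PiEq (extMarg1 r s))
    (hopt : ∀ Y ∈ PiEq (extMarg1 r s), dot (extCost C A) Xb ≤ dot (extCost C A) Y) :
    restr Xb ∈ PiPartial r s ∧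
      ∀ X ∈ PiPartial r s, dot C (restr Xb) ≤ dot C X := by
  classical
  have hno : ∀ u, 2 ≤ nLast u → Xb u = 0 := fun u h =>
    no_high_mass hm C hC r s hs0 A hA1 hA Xb hmem hopt u h
  have hid := mass_identity hm r s Xb hmem
  have hmarg_le : ∀ k j, marg (restr Xb) k j ≤ r k j := by
    intro k j
    have hle : marg (restr Xb) k j ≤ marg Xb k (Fin.castSucc j) := by
      unfold marg restr
      rw [show (∑ v : Fin m → Fin n, if v k = j then Xb (emb v) else 0)
          = ∑ v : Fin m → Fin n, (fun u => if u k = Fin.castSucc j then Xb u else 0) (emb v) from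
        Finset.sum_congr rfl fun v _ => by simp [emb, Fin.castSucc_inj]]
      rw [← Finset.sum_image (f := fun u => if u k = Fin.castSucc j then Xb u else 0)
        (g := emb) (fun x _ y _ h => emb_inj h)]
      refine Finset.sum_le_sum_of_subset_of_nonneg (Finset.subset_univ _) ?_
      intro u _ _
      by_cases h : u k = Fin.castSucc j <;> simp [h, hmem.1 u]
    calc marg (restr Xb) k j ≤ marg Xb k (Fin.castSucc j) := hle
      _ = r k j := by rw [hmem.2]; simp [extMarg1, Fin.snoc_castSucc]
  have htot : ∑ v : Fin m → Fin n, restr Xb v = s := by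
    have h1 : ∑ v : Fin m → Fin n, restr Xb v
        = ∑ u : Fin m → Fin (n+1), (if ∀ i, u i ≠ Fin.last n then Xb u else 0) := by
      rw [sum_emb (fun u => if ∀ i, u i ≠ Fin.last n then Xb u else 0)
        (fun u hu => by
          obtain ⟨i, hi⟩ := hu
          show (if ∀ i, u i ≠ Fin.last n then Xb u else 0) = 0
          rw [if_neg (by push_neg; exact ⟨i, hi⟩)])]
      exact Finset.sum_congr rfl fun v _ => (if_pos (emb_ne_last v)).symm
    have h2 : ∑ u : Fin m → Fin (n+1), (if ∀ i, u i ≠ Fin.last n then (0:ℝ) else Xb u)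
        = ∑ u, (nLast u : ℝ) * Xb u := by
      refine Finset.sum_congr rfl fun u _ => ?_
      by_cases h0 : ∀ i, u i ≠ Fin.last n
      · rw [if_pos h0]
        have hz : nLast u = 0 := by
          rw [nLast, Finset.card_eq_zero, Finset.filter_eq_empty_iff]
          exact fun _ _ => h0 _
        rw [hz]; simp
      · push_neg at h0
        obtain ⟨i, hi⟩ := h0
        rw [if_neg (by push_neg; exact ⟨i, hi⟩)]
        have h1' := nLast_pos u i hi
        rcases eq_or_lt_of_le h1' with h | h
        · rw [← h]; simp
        · rw [hno u h]; simp
    have h3 : ∀ u : Fin m → Fin (n+1), (if ∀ i, u i ≠ Fin.last n then Xb u else 0)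
        = Xb u - (if ∀ i, u i ≠ Fin.last n then 0 else Xb u) := fun u => by
      by_cases h : ∀ i, u i ≠ Fin.last n <;> simp [h]
    rw [h1, Finset.sum_congr rfl fun u _ => h3 u, Finset.sum_sub_distrib, h2, hid]
    ring
  have hfeas : restr Xb ∈ PiPartial r s := ⟨fun v => hmem.1 _, hmarg_le, htot⟩
  have hdot : dot (extCost C A) Xb = dot C (restr Xb) := by
    unfold dot
    rw [sum_emb (fun u => extCost C A u * Xb u) ?_]
    · exact Finset.sum_congr rfl fun v _ => by rw [extCost_emb]; rfl
    · rintro u ⟨i, hi⟩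
      have h1 := nLast_pos u i hi
      rcases eq_or_lt_of_le h1 with h | h
      · have hc : extCost C A u = 0 := by
          simp only [extCost]
          rw [dif_neg (by push_neg; exact ⟨i, hi⟩), ← h, hA1]
        show extCost C A u * Xb u = 0
        rw [hc, zero_mul]
      · show extCost C A u * Xb u = 0
        rw [hno u h, mul_zero]
  refine ⟨hfeas, fun X hX => ?_⟩
  have h1 := hopt (extT r s X) (extT_mem hm hX hcond)
  rw [dot_extT hm hX hcond C A hA1, hdot] at h1
  exact h1
end
end

section
/- Assume Σ_r := Σ_{i=1}^m ‖r_i‖₁ ≥ (m−1)‖r_k‖₁ + s for all k ∈ [m], and let r̄_k^{(1)} = [r_k, Σ_r/(m−1) − ‖r_k‖₁ − s/(m−1)] ∈ ℝ^{n+1}_+. Then every tensor X̄ ∈ Π(r̄_1^{(1)},…,r̄_m^{(1)}) satisfies Σ_{v ∈ [n]^m} X̄_v ≥ s; in particular, there exists u ∈ [n]^m with X̄_u > 0 whenever s > 0. -/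
open Finset

noncomputable section

open MPOT

/-- Step 1 of the proof of Theorem 3.1: under the mass condition
`Σ_r ≥ (m−1)‖r_k‖₁ + s` for all `k`, every plan in `Π(r̄_1^{(1)}, …, r̄_m^{(1)})` puts
total mass at least `s` on the indices in `[n]^m`; in particular, when `s > 0`, some
entry indexed by `[n]^m` is positive. -/
theorem mpot_first_form_mass_lower_bound {m n : ℕ} (hm : 2 ≤ m) (hn : 1 ≤ n)
    (r : Fin m → Fin n → ℝ) (hr : ∀ k j, 0 ≤ r k j)
    (s : ℝ) (hs0 : 0 ≤ s) (hs : ∀ k, s ≤ ∑ j, r k j)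
    (hcond : ∀ k, ((m : ℝ) - 1) * (∑ j, r k j) + s ≤ ∑ i, ∑ j, r i j)
    (Xb : (Fin m → Fin (n + 1)) → ℝ) (hmem : Xb ∈ PiEq (extMarg1 r s)) :
    s ≤ (∑ v : Fin m → Fin n, Xb (emb v)) ∧
      (0 < s → ∃ u : Fin m → Fin n, 0 < Xb (emb u)) := by
  obtain ⟨hpos, hmarg⟩ := hmem
  have hm1 : (1:ℝ) ≤ (m:ℝ) - 1 := by
    have h2 : (2:ℝ) ≤ (m:ℝ) := by exact_mod_cast hm
    linarith
  have hmne : (m:ℝ) - 1 ≠ 0 := by linarith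
  have k0 : Fin m := ⟨0, by omega⟩
  -- total mass
  have hT : ∀ k : Fin m, (∑ u : Fin m → Fin (n+1), Xb u)
      = (∑ i, ∑ j, r i j) / ((m : ℝ) - 1) - s / ((m : ℝ) - 1) := by
    intro k
    have h1 : (∑ j : Fin (n+1), marg Xb k j) = ∑ u : Fin m → Fin (n+1), Xb u := by
      unfold marg
      rw [Finset.sum_comm]
      refine Finset.sum_congr rfl fun u _ => ?_
      simp
    have h2 : (∑ j : Fin (n+1), marg Xb k j) = ∑ j : Fin (n+1), extMarg1 r s k j := by
      exact Finset.sum_congr rfl fun j _ => hmarg k j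
    rw [← h1, h2]
    unfold extMarg1
    rw [Fin.sum_univ_castSucc]
    simp [Fin.snoc_castSucc, Fin.snoc_last]
    ring
  -- interior sum as filtered sum
  have hI : (∑ v : Fin m → Fin n, Xb (emb v))
      = ∑ u : Fin m → Fin (n+1), if ∀ i, u i ≠ Fin.last n then Xb u else 0 := by
    rw [← Finset.sum_filter]
    refine Finset.sum_nbij' (i := fun v => emb v)
      (j := fun u i => if h : u i = Fin.last n then ⟨0, hn⟩ else (u i).castPred h)
      ?_ ?_ ?_ ?_ ?_
    · intro v _
      simp only [Finset.mem_filter, Finset.mem_univ, true_and]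
      intro i
      exact (Fin.castSucc_lt_last (v i)).ne
    · intro u _
      exact Finset.mem_univ _
    · intro v _
      funext i
      simp [emb, (Fin.castSucc_lt_last (v i)).ne]
    · intro u hu
      simp only [Finset.mem_filter, Finset.mem_univ, true_and] at hu
      funext i
      simp [emb, hu i, Fin.castSucc_castPred]
    · intro v _
      rfl
  -- boundary mass
  have hB : ∀ k : Fin m, (∑ u : Fin m → Fin (n+1), if u k = Fin.last n then Xb u else 0)
      = (∑ i, ∑ j, r i j) / ((m : ℝ) - 1) - (∑ j, r k j) - s / ((m : ℝ) - 1) := by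
    intro k
    have := hmarg k (Fin.last n)
    unfold marg at this
    rw [this]
    unfold extMarg1
    simp [Fin.snoc_last]
  -- union bound
  have hub : (∑ u : Fin m → Fin (n+1), Xb u) - (∑ v : Fin m → Fin n, Xb (emb v))
      ≤ ∑ k : Fin m, ((∑ i, ∑ j, r i j) / ((m : ℝ) - 1) - (∑ j, r k j) - s / ((m : ℝ) - 1)) := by
    have step : (∑ u : Fin m → Fin (n+1), Xb u) - (∑ v : Fin m → Fin n, Xb (emb v))
        = ∑ u : Fin m → Fin (n+1), (if ∀ i, u i ≠ Fin.last n then (0:ℝ) else Xb u) := by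
      rw [hI, ← Finset.sum_sub_distrib]
      refine Finset.sum_congr rfl fun u _ => ?_
      by_cases h : ∀ i, u i ≠ Fin.last n <;> simp [h]
    rw [step]
    have : ∀ k : Fin m, ((∑ i, ∑ j, r i j) / ((m : ℝ) - 1) - (∑ j, r k j) - s / ((m : ℝ) - 1))
        = ∑ u : Fin m → Fin (n+1), if u k = Fin.last n then Xb u else 0 :=
      fun k => (hB k).symm
    rw [Finset.sum_congr rfl fun k _ => this k, Finset.sum_comm]
    refine Finset.sum_le_sum fun u _ => ?_
    by_cases h : ∀ i, u i ≠ Fin.last n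
    · rw [if_pos h]
      refine Finset.sum_nonneg fun k _ => ?_
      by_cases hk : u k = Fin.last n <;> simp [hk, hpos u]
    · push_neg at h
      obtain ⟨i0, hi0⟩ := h
      rw [if_neg (fun hall => hall i0 hi0)]
      calc Xb u = (if u i0 = Fin.last n then Xb u else 0) := by rw [if_pos hi0]
        _ ≤ ∑ k : Fin m, if u k = Fin.last n then Xb u else 0 := by
            refine Finset.single_le_sum (f := fun k => if u k = Fin.last n then Xb u else 0)
              (fun k _ => ?_) (Finset.mem_univ i0)
            by_cases hk : u k = Fin.last n <;> simp [hk, hpos u]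
  have hsum : ∀ k : Fin m, (∑ k : Fin m, ((∑ i, ∑ j, r i j) / ((m : ℝ) - 1)
      - (∑ j, r k j) - s / ((m : ℝ) - 1)))
      = (m : ℝ) * ((∑ i, ∑ j, r i j) / ((m : ℝ) - 1)) - (∑ i, ∑ j, r i j)
        - (m : ℝ) * (s / ((m : ℝ) - 1)) := by
    intro k
    rw [Finset.sum_sub_distrib, Finset.sum_sub_distrib]
    simp [Finset.sum_const, Finset.card_univ, mul_comm]
  have key : s ≤ ∑ v : Fin m → Fin n, Xb (emb v) := by
    have h1 := hub
    rw [hT k0, hsum k0] at h1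
    have hM : (0:ℝ) < (m:ℝ) - 1 := by linarith
    have eA : ((m:ℝ)-1) * ((∑ i, ∑ j, r i j) / ((m:ℝ)-1)) = ∑ i, ∑ j, r i j := by
      field_simp
    have eS : ((m:ℝ)-1) * (s / ((m:ℝ)-1)) = s := by field_simp
    linarith [h1, eA, eS]
  refine ⟨key, fun hspos => ?_⟩
  by_contra h
  push_neg at h
  have : (∑ v : Fin m → Fin n, Xb (emb v)) ≤ 0 :=
    Finset.sum_nonpos fun v _ => h v
  linarith
end
end

section
/- Under the assumptions and constructions of the first equivalent form (condition Σ_r ≥ (m−1)‖r_k‖₁ + s for all k, extended marginals r̄_k^{(1)}, extended cost C̄^{(1)} with 0 = A_1 < A_2 < … < A_m), every minimizer X̄* of ⟨C̄^{(1)}, ·⟩ over Π(r̄_1^{(1)},…,r̄_m^{(1)}) is supported on the zeroth and first layers: X̄*_v = 0 for every index v ∉ T_∅ ∪ (∪_{j=1}^m T_{{j}}). -/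
set_option maxHeartbeats 1000000


open Finset

noncomputable section

open MPOT

namespace MPOTAux

lemma sum_marg {m n : ℕ} (X : (Fin m → Fin n) → ℝ) (k : Fin m) :
    ∑ j, marg X k j = ∑ v, X v := by
  unfold marg
  rw [Finset.sum_comm]
  refine Finset.sum_congr rfl fun v _ => ?_
  simp

lemma sum_marg_last {m n : ℕ} (X : (Fin m → Fin (n+1)) → ℝ) :
    ∑ k, marg X k (Fin.last n) = ∑ u, (nLast u : ℝ) * X u := by
  unfold marg nLast
  rw [Finset.sum_comm]
  refine Finset.sum_congr rfl fun u _ => ?_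
  rw [Finset.card_filter]
  push_cast
  rw [Finset.sum_mul]
  refine Finset.sum_congr rfl fun k _ => ?_
  by_cases h : u k = Fin.last n <;> simp [h]

lemma marg_add {m n : ℕ} (X Z : (Fin m → Fin n) → ℝ) (k : Fin m) (j : Fin n) :
    marg (X + Z) k j = marg X k j + marg Z k j := by
  unfold marg
  rw [← Finset.sum_add_distrib]
  refine Finset.sum_congr rfl fun v _ => ?_
  by_cases h : v k = j <;> simp [h]

lemma marg_sub {m n : ℕ} (X Z : (Fin m → Fin n) → ℝ) (k : Fin m) (j : Fin n) :
    marg (X - Z) k j = marg X k j - marg Z k j := by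
  unfold marg
  rw [← Finset.sum_sub_distrib]
  refine Finset.sum_congr rfl fun v _ => ?_
  by_cases h : v k = j <;> simp [h]

lemma marg_smul {m n : ℕ} (c : ℝ) (X : (Fin m → Fin n) → ℝ) (k : Fin m) (j : Fin n) :
    marg (c • X) k j = c * marg X k j := by
  unfold marg
  rw [Finset.mul_sum]
  refine Finset.sum_congr rfl fun v _ => ?_
  by_cases h : v k = j <;> simp [h]

def delta {m n : ℕ} (w : Fin m → Fin n) : (Fin m → Fin n) → ℝ :=
  fun u => if u = w then 1 else 0

lemma marg_delta {m n : ℕ} (w : Fin m → Fin n) (k : Fin m) (j : Fin n) :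
    marg (delta w) k j = if w k = j then 1 else 0 := by
  unfold marg delta
  rw [Finset.sum_eq_single w]
  · simp
  · intro u _ hu; simp [hu]
  · simp

lemma dot_add {m n : ℕ} (C X Z : (Fin m → Fin n) → ℝ) :
    dot C (X + Z) = dot C X + dot C Z := by
  unfold dot
  rw [← Finset.sum_add_distrib]
  refine Finset.sum_congr rfl fun v _ => ?_
  simp [mul_add]

lemma dot_sub {m n : ℕ} (C X Z : (Fin m → Fin n) → ℝ) :
    dot C (X - Z) = dot C X - dot C Z := by
  unfold dot
  rw [← Finset.sum_sub_distrib]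
  refine Finset.sum_congr rfl fun v _ => ?_
  simp [mul_sub]

lemma dot_smul {m n : ℕ} (c : ℝ) (C X : (Fin m → Fin n) → ℝ) :
    dot C (c • X) = c * dot C X := by
  unfold dot
  rw [Finset.mul_sum]
  refine Finset.sum_congr rfl fun v _ => ?_
  simp; ring

lemma dot_delta {m n : ℕ} (C : (Fin m → Fin n) → ℝ) (w : Fin m → Fin n) :
    dot C (delta w) = C w := by
  unfold dot delta
  rw [Finset.sum_eq_single w]
  · simp
  · intro u _ hu; simp [hu]
  · simp

end MPOTAux

/-- Step 2 of the proof of Theorem 3.1: under the assumptions of the first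
equivalent form, every minimizer of `⟨C̄^{(1)}, ·⟩` over `Π(r̄_1^{(1)}, …, r̄_m^{(1)})`
is supported on the zeroth and first layers: entries at indices having at least two
coordinates equal to `n+1` vanish. -/
theorem mpot_first_form_support {m n : ℕ} (hm : 2 ≤ m) (hn : 1 ≤ n)
    (C : (Fin m → Fin n) → ℝ) (hC : ∀ v, 0 ≤ C v)
    (r : Fin m → Fin n → ℝ) (hr : ∀ k j, 0 ≤ r k j)
    (s : ℝ) (hs0 : 0 ≤ s) (hs : ∀ k, s ≤ ∑ j, r k j)
    (hcond : ∀ k, ((m : ℝ) - 1) * (∑ j, r k j) + s ≤ ∑ i, ∑ j, r i j)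
    (A : ℕ → ℝ) (hA1 : A 1 = 0) (hA : ∀ i, 1 ≤ i → i < m → A i < A (i + 1))
    (Xb : (Fin m → Fin (n + 1)) → ℝ) (hmem : Xb ∈ PiEq (extMarg1 r s))
    (hopt : ∀ Y ∈ PiEq (extMarg1 r s), dot (extCost C A) Xb ≤ dot (extCost C A) Y) :
    ∀ v : Fin m → Fin (n + 1), 2 ≤ nLast v → Xb v = 0 := by
  intro v hv
  by_contra hne
  obtain ⟨hXb0, hmarg⟩ := hmem
  have hXv : 0 < Xb v := lt_of_le_of_ne (hXb0 v) (Ne.symm hne)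
  have hmR : (2:ℝ) ≤ (m:ℝ) := by exact_mod_cast hm
  have hm0 : ((m:ℝ) - 1) ≠ 0 := by linarith
  set Sr := ∑ i, ∑ j, r i j with hSr
  -- total mass of Xb
  have k0 : Fin m := ⟨0, by omega⟩
  have hM : ∑ u, Xb u = (Sr - s) / ((m:ℝ) - 1) := by
    calc ∑ u, Xb u = ∑ j, marg Xb k0 j := (MPOTAux.sum_marg Xb k0).symm
    _ = ∑ j, extMarg1 r s k0 j := Finset.sum_congr rfl fun j _ => hmarg k0 j
    _ = (Sr - s) / ((m:ℝ) - 1) := by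
        rw [Fin.sum_univ_castSucc]
        simp only [extMarg1, Fin.snoc_castSucc, Fin.snoc_last, ← hSr]
        field_simp
        ring
  -- mass weighted by number of last coordinates
  have hL : ∑ u, (nLast u : ℝ) * Xb u = (Sr - (m:ℝ) * s) / ((m:ℝ) - 1) := by
    rw [← MPOTAux.sum_marg_last Xb]
    have hcol : ∀ k : Fin m, marg Xb k (Fin.last n)
        = Sr / ((m:ℝ)-1) - (∑ j, r k j) - s/((m:ℝ)-1) := by
      intro k; rw [hmarg k]; simp [extMarg1, ← hSr]
    rw [Finset.sum_congr rfl fun k _ => hcol k]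
    rw [Finset.sum_sub_distrib, Finset.sum_sub_distrib, Finset.sum_const, Finset.sum_const]
    simp only [Finset.card_univ, Fintype.card_fin, nsmul_eq_mul, ← hSr]
    field_simp
    ring
  have hkey : ∑ u, (1 - (nLast u : ℝ)) * Xb u = s := by
    have hsplit : ∑ u, (1 - (nLast u : ℝ)) * Xb u
        = ∑ u, Xb u - ∑ u, (nLast u:ℝ) * Xb u := by
      rw [← Finset.sum_sub_distrib]
      exact Finset.sum_congr rfl fun u _ => by ring
    rw [hsplit, hM, hL]
    field_simp
    ring
  -- there is mass on the zeroth layer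
  have hsum_le : ∑ u, (1 - (nLast u:ℝ)) * Xb u
      ≤ (∑ u, if nLast u = 0 then Xb u else 0) - Xb v := by
    have hle : ∀ u ∈ (univ : Finset (Fin m → Fin (n+1))),
        (1 - (nLast u:ℝ)) * Xb u
          ≤ (if nLast u = 0 then Xb u else 0) - (if u = v then Xb v else 0) := by
      intro u _
      by_cases huv : u = v
      · have h2n : 2 ≤ nLast u := by rw [huv]; exact hv
        have h0 : nLast u ≠ 0 := by omega
        have h2 : (2:ℝ) ≤ (nLast u : ℝ) := by exact_mod_cast h2n
        rw [if_neg h0, if_pos huv, huv]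
        rw [← huv]
        have := hXb0 u
        nlinarith
      · by_cases h0 : nLast u = 0
        · simp [h0, huv]
        · have h1 : (1:ℝ) ≤ (nLast u : ℝ) := by
            exact_mod_cast Nat.one_le_iff_ne_zero.mpr h0
          rw [if_neg h0, if_neg huv]
          have := hXb0 u
          nlinarith
    calc ∑ u, (1 - (nLast u:ℝ)) * Xb u
        ≤ ∑ u, ((if nLast u = 0 then Xb u else 0) - (if u = v then Xb v else 0)) :=
          Finset.sum_le_sum hle
      _ = (∑ u, if nLast u = 0 then Xb u else 0) - Xb v := by
          rw [Finset.sum_sub_distrib]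
          simp
  have hexists : ∃ u₀, nLast u₀ = 0 ∧ 0 < Xb u₀ := by
    by_contra hcon
    push_neg at hcon
    have hnp : ∑ u, (if nLast u = 0 then Xb u else 0) ≤ 0 := by
      apply Finset.sum_nonpos
      intro u _
      by_cases h0 : nLast u = 0
      · simpa [h0] using hcon u h0
      · simp [h0]
    rw [hkey] at hsum_le
    linarith
  obtain ⟨u₀, hu0, hXu0⟩ := hexists
  -- pick a coordinate k where v is last
  have hfv : 0 < (univ.filter fun ℓ => v ℓ = Fin.last n).card := by
    have h2 : 2 ≤ nLast v := hv
    unfold nLast at h2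
    omega
  obtain ⟨k, hkmem⟩ := Finset.card_pos.mp hfv
  have hvk : v k = Fin.last n := (Finset.mem_filter.mp hkmem).2
  have hu0k : ∀ i, u₀ i ≠ Fin.last n := by
    intro i hi
    have he : (univ.filter fun ℓ => u₀ ℓ = Fin.last n) = ∅ := by
      apply Finset.card_eq_zero.mp
      exact hu0
    exact Finset.eq_empty_iff_forall_notMem.mp he i
      (Finset.mem_filter.mpr ⟨Finset.mem_univ i, hi⟩)
  -- the swapped indices
  set v' := Function.update v k (u₀ k) with hv'def
  set u' := Function.update u₀ k (Fin.last n) with hu'def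
  have hv'k : v' k = u₀ k := Function.update_self k _ v
  have hu'k : u' k = Fin.last n := Function.update_self k _ u₀
  have hv'i : ∀ i, i ≠ k → v' i = v i := fun i hi => Function.update_of_ne hi _ v
  have hu'i : ∀ i, i ≠ k → u' i = u₀ i := fun i hi => Function.update_of_ne hi _ u₀
  have hfiltv' : (univ.filter fun ℓ => v' ℓ = Fin.last n)
      = (univ.filter fun ℓ => v ℓ = Fin.last n).erase k := by
    ext ℓ
    simp only [Finset.mem_filter, Finset.mem_erase, Finset.mem_univ, true_and]
    by_cases hl : ℓ = k
    · subst hl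
      simp [hv'k, hu0k ℓ]
    · simp [hv'i ℓ hl, hl]
  have hnv' : nLast v' = nLast v - 1 := by
    unfold nLast
    rw [hfiltv', Finset.card_erase_of_mem hkmem]
  have hfiltu' : (univ.filter fun ℓ => u' ℓ = Fin.last n) = {k} := by
    ext ℓ
    simp only [Finset.mem_filter, Finset.mem_univ, true_and, Finset.mem_singleton]
    by_cases hl : ℓ = k
    · subst hl; simp [hu'k]
    · simp [hu'i ℓ hl, hl, hu0k ℓ]
  have hnu' : nLast u' = 1 := by
    unfold nLast; rw [hfiltu']; simp
  -- cost values
  have hCv : extCost C A v = A (nLast v) := by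
    unfold extCost
    rw [dif_neg]
    intro h; exact h k hvk
  have hposv' : 0 < (univ.filter fun ℓ => v' ℓ = Fin.last n).card := by
    have : (univ.filter fun ℓ => v' ℓ = Fin.last n).card = nLast v' := rfl
    rw [this, hnv']
    omega
  obtain ⟨ℓ₀, hℓ₀⟩ := Finset.card_pos.mp hposv'
  have hCv' : extCost C A v' = A (nLast v - 1) := by
    rw [← hnv']
    unfold extCost
    rw [dif_neg]
    intro h
    exact h ℓ₀ ((Finset.mem_filter.mp hℓ₀).2)
  have hCu' : extCost C A u' = A 1 := by
    rw [← hnu']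
    unfold extCost
    rw [dif_neg]
    intro h; exact h k hu'k
  have hCu0 : 0 ≤ extCost C A u₀ := by
    unfold extCost
    rw [dif_pos hu0k]
    exact hC _
  have hpm : nLast v ≤ m := by
    have h := Finset.card_filter_le (univ : Finset (Fin m)) (fun ℓ => v ℓ = Fin.last n)
    simpa [nLast, Finset.card_univ] using h
  have hAlt : A (nLast v - 1) < A (nLast v) := by
    have h := hA (nLast v - 1) (by omega) (by omega)
    rwa [Nat.sub_add_cancel (by omega)] at h
  -- distinctness
  have hneq1 : v' ≠ v := by
    intro h; apply hu0k k; rw [← hv'k, h]; exact hvk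
  have hneq2 : u' ≠ u₀ := by
    intro h; apply hu0k k; rw [← h]; exact hu'k
  have hneq3 : v ≠ u₀ := by
    intro h; apply hu0k k; rw [← h]; exact hvk
  have hneq4 : v' ≠ u' := by
    intro h; apply hu0k k; rw [← hv'k, h]; exact hu'k
  have hneq5 : v' ≠ u₀ := by
    intro h
    have hh : nLast v' = nLast u₀ := by rw [h]
    omega
  have hneq6 : u' ≠ v := by
    intro h
    have hh : nLast u' = nLast v := by rw [h]
    omega
  -- the perturbation
  set ε := min (Xb v) (Xb u₀) with hεdef
  have hεpos : 0 < ε := lt_min hXv hXu0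
  have hεv : ε ≤ Xb v := min_le_left _ _
  have hεu : ε ≤ Xb u₀ := min_le_right _ _
  set Y : (Fin m → Fin (n+1)) → ℝ :=
    Xb + ε • (MPOTAux.delta v' + MPOTAux.delta u' - MPOTAux.delta v - MPOTAux.delta u₀)
    with hYdef
  have hYval : ∀ u, Y u = Xb u + ε * ((if u = v' then (1:ℝ) else 0)
      + (if u = u' then 1 else 0) - (if u = v then 1 else 0)
      - (if u = u₀ then 1 else 0)) := by
    intro u
    simp [hYdef, MPOTAux.delta, Pi.add_apply, Pi.sub_apply, Pi.smul_apply, smul_eq_mul]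
  have hYnn : ∀ u, 0 ≤ Y u := by
    intro u
    rw [hYval u]
    by_cases h1 : u = v'
    · rw [if_pos h1, if_neg (show u ≠ u' by rw [h1]; exact hneq4),
        if_neg (show u ≠ v by rw [h1]; exact hneq1),
        if_neg (show u ≠ u₀ by rw [h1]; exact hneq5)]
      have := hXb0 u
      nlinarith
    · by_cases h2 : u = u'
      · rw [if_neg h1, if_pos h2, if_neg (show u ≠ v by rw [h2]; exact hneq6),
          if_neg (show u ≠ u₀ by rw [h2]; exact hneq2)]
        have := hXb0 u
        nlinarith
      · by_cases h3 : u = v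
        · rw [if_neg h1, if_neg h2, if_pos h3,
            if_neg (show u ≠ u₀ by rw [h3]; exact hneq3), h3]
          nlinarith
        · by_cases h4 : u = u₀
          · rw [if_neg h1, if_neg h2, if_neg h3, if_pos h4, h4]
            nlinarith
          · rw [if_neg h1, if_neg h2, if_neg h3, if_neg h4]
            have := hXb0 u
            nlinarith
  have hYmarg : ∀ i j, marg Y i j = extMarg1 r s i j := by
    intro i j
    have hstep : marg Y i j = marg Xb i j + ε * ((if v' i = j then (1:ℝ) else 0)
        + (if u' i = j then 1 else 0) - (if v i = j then 1 else 0)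
        - (if u₀ i = j then 1 else 0)) := by
      rw [hYdef, MPOTAux.marg_add, MPOTAux.marg_smul, MPOTAux.marg_sub, MPOTAux.marg_sub,
        MPOTAux.marg_add, MPOTAux.marg_delta, MPOTAux.marg_delta, MPOTAux.marg_delta,
        MPOTAux.marg_delta]
    rw [hstep]
    have hz : (if v' i = j then (1:ℝ) else 0) + (if u' i = j then 1 else 0)
        - (if v i = j then 1 else 0) - (if u₀ i = j then 1 else 0) = 0 := by
      by_cases hik : i = k
      · subst hik
        rw [hv'k, hu'k, hvk]
        ring
      · rw [hv'i i hik, hu'i i hik]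
        ring
    rw [hz, mul_zero, add_zero]
    exact hmarg i j
  have hYmem : Y ∈ PiEq (extMarg1 r s) := ⟨hYnn, hYmarg⟩
  have hdot : dot (extCost C A) Y = dot (extCost C A) Xb
      + ε * (A (nLast v - 1) + A 1 - A (nLast v) - extCost C A u₀) := by
    rw [hYdef, MPOTAux.dot_add, MPOTAux.dot_smul, MPOTAux.dot_sub, MPOTAux.dot_sub,
      MPOTAux.dot_add, MPOTAux.dot_delta, MPOTAux.dot_delta, MPOTAux.dot_delta,
      MPOTAux.dot_delta, hCv, hCv', hCu']
  have hbrack : A (nLast v - 1) + A 1 - A (nLast v) - extCost C A u₀ < 0 := by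
    rw [hA1]; linarith
  have hlt : dot (extCost C A) Y < dot (extCost C A) Xb := by
    rw [hdot]
    nlinarith [mul_neg_of_pos_of_neg hεpos hbrack]
  exact absurd (hopt Y hYmem) (not_le.mpr hlt)
end
end

section
/- Under the assumptions and constructions of the first equivalent form (condition Σ_r ≥ (m−1)‖r_k‖₁ + s for all k, extended marginals r̄_k^{(1)}, extended cost C̄^{(1)} with 0 = A_1 < A_2 < … < A_m), every minimizer X̄* of ⟨C̄^{(1)}, ·⟩ over Π(r̄_1^{(1)},…,r̄_m^{(1)}) places exactly mass s on the zeroth layer: Σ_{v ∈ T_∅} X̄*_v = s. -/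
open Finset

noncomputable section

namespace MPOT

/-- Auxiliary: summing an indicator of a product condition. -/
lemma aux_ind_sum {m n : ℕ} (a : Fin m → Fin n) (k : Fin m) (j : Fin n)
    (c : ℝ) :
    (∑ v : Fin m → Fin n, if v k = j then (if v = a then c else 0) else 0)
      = if a k = j then c else 0 := by
  have h : ∀ v : Fin m → Fin n,
      (if v k = j then (if v = a then c else 0) else 0)
        = if v = a then (if a k = j then c else 0) else 0 := by
    intro v
    by_cases hv : v = a
    · subst hv; simp
    · simp [hv]
  rw [Finset.sum_congr rfl fun v _ => h v]
  simp

/-- Auxiliary: pairing a tensor against a point indicator. -/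
lemma aux_dot_ind {m n : ℕ} (Cb : (Fin m → Fin n) → ℝ) (a : Fin m → Fin n) :
    (∑ v : Fin m → Fin n, Cb v * (if v = a then (1:ℝ) else 0)) = Cb a := by
  simp [mul_ite]

/-- Summing the marginal over all values gives the total mass. -/
lemma marg_total {m n : ℕ} (X : (Fin m → Fin n) → ℝ) (k : Fin m) :
    ∑ j, marg X k j = ∑ v : Fin m → Fin n, X v := by
  simp only [marg]
  rw [Finset.sum_comm]
  simp [Finset.sum_ite_eq]

/-- Summing the last-coordinate marginal over all `k` counts last coordinates. -/
lemma marg_last_total {m n : ℕ} (X : (Fin m → Fin (n + 1)) → ℝ) :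
    ∑ k, marg X k (Fin.last n)
      = ∑ u : Fin m → Fin (n + 1), (nLast u : ℝ) * X u := by
  simp only [marg]
  rw [Finset.sum_comm]
  refine Finset.sum_congr rfl fun u _ => ?_
  rw [Finset.sum_ite, Finset.sum_const, Finset.sum_const_zero, add_zero,
    nsmul_eq_mul, nLast]

/-- The swap construction: if a feasible plan puts positive mass both on a point with
at least two artificial coordinates and on a point with none, it is not optimal. -/
lemma swap_improve {m n : ℕ} (hm : 2 ≤ m)
    (C : (Fin m → Fin n) → ℝ) (hC : ∀ v, 0 ≤ C v)
    (A : ℕ → ℝ) (hA1 : A 1 = 0)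
    (hA : ∀ i, 1 ≤ i → i < m → A i < A (i + 1))
    (a : Fin m → Fin (n + 1) → ℝ)
    (X : (Fin m → Fin (n + 1)) → ℝ) (hX : X ∈ PiEq a)
    (u w : Fin m → Fin (n + 1)) (hu2 : 2 ≤ nLast u) (hw0 : nLast w = 0)
    (hXu : 0 < X u) (hXw : 0 < X w) :
    ∃ Y ∈ PiEq a, dot (extCost C A) Y < dot (extCost C A) X := by
  obtain ⟨hX0, hXm⟩ := hX
  have hw0' : (univ.filter fun ℓ => w ℓ = Fin.last n).card = 0 := hw0
  have hwall : ∀ i, w i ≠ Fin.last n := by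
    intro i hi
    have hmem : i ∈ univ.filter fun ℓ => w ℓ = Fin.last n := by simp [hi]
    have := Finset.card_pos.2 ⟨i, hmem⟩
    omega
  have hu2' : 2 ≤ (univ.filter fun ℓ => u ℓ = Fin.last n).card := hu2
  have hupos : 0 < (univ.filter fun ℓ => u ℓ = Fin.last n).card := by omega
  obtain ⟨l, hl⟩ := Finset.card_pos.1 hupos
  have hul : u l = Fin.last n := (Finset.mem_filter.1 hl).2
  have huw : u ≠ w := fun h => hwall l (h ▸ hul)
  set u' : Fin m → Fin (n + 1) := Function.update u l (w l) with hu'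
  set w' : Fin m → Fin (n + 1) := Function.update w l (Fin.last n) with hw'
  set δ : ℝ := min (X u) (X w) with hδ
  have hδpos : 0 < δ := lt_min hXu hXw
  set Y : (Fin m → Fin (n + 1)) → ℝ := fun v =>
    X v + δ * ((if v = u' then 1 else 0) + (if v = w' then 1 else 0)
      - (if v = u then 1 else 0) - (if v = w then 1 else 0)) with hY
  have hnu' : nLast u' = nLast u - 1 := by
    have hset : (univ.filter fun i => u' i = Fin.last n)
        = (univ.filter fun i => u i = Fin.last n).erase l := by
      ext i
      by_cases h : i = l
      · subst h
        simp [hu', Function.update_self, hwall]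
      · simp [hu', Function.update_of_ne h, h]
    rw [nLast, hset, Finset.card_erase_of_mem hl, nLast]
  have hnw' : nLast w' = 1 := by
    have hset : (univ.filter fun i => w' i = Fin.last n) = {l} := by
      ext i
      by_cases h : i = l
      · subst h; simp [hw', Function.update_self]
      · simp [hw', Function.update_of_ne h, h, hwall]
    rw [nLast, hset, Finset.card_singleton]
  have hnotall : ¬ ∀ i, u i ≠ Fin.last n := by push_neg; exact ⟨l, hul⟩
  have hcu : extCost C A u = A (nLast u) := by rw [extCost, dif_neg hnotall]
  have hnotall' : ¬ ∀ i, u' i ≠ Fin.last n := by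
    intro h
    have h0 : nLast u' = 0 := by
      rw [nLast, Finset.card_eq_zero, Finset.filter_eq_empty_iff]
      intro x _; exact h x
    omega
  have hcu' : extCost C A u' = A (nLast u - 1) := by
    rw [extCost, dif_neg hnotall', hnu']
  have hnotallw' : ¬ ∀ i, w' i ≠ Fin.last n := by
    push_neg
    refine ⟨l, ?_⟩
    show Function.update w l (Fin.last n) l = Fin.last n
    exact Function.update_self _ _ _
  have hcw' : extCost C A w' = 0 := by
    rw [extCost, dif_neg hnotallw', hnw', hA1]
  have hcw : extCost C A w = C fun i => (w i).castPred (hwall i) := by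
    rw [extCost, dif_pos hwall]
  have hAlt : A (nLast u - 1) < A (nLast u) := by
    have hum : nLast u ≤ m := by
      have := Finset.card_filter_le univ (fun i => u i = Fin.last n)
      simpa [nLast] using this
    have h1 : 1 ≤ nLast u - 1 := by omega
    have h2 : nLast u - 1 < m := by omega
    have := hA (nLast u - 1) h1 h2
    have heq : nLast u - 1 + 1 = nLast u := by omega
    rwa [heq] at this
  have hY0 : ∀ v, 0 ≤ Y v := by
    intro v
    show 0 ≤ X v + δ * ((if v = u' then 1 else 0) + (if v = w' then 1 else 0)
      - (if v = u then 1 else 0) - (if v = w then 1 else 0))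
    set a1 : ℝ := if v = u' then 1 else 0 with ha1
    set a2 : ℝ := if v = w' then 1 else 0 with ha2
    set a3 : ℝ := if v = u then 1 else 0 with ha3
    set a4 : ℝ := if v = w then 1 else 0 with ha4
    have h1 : 0 ≤ a1 := by rw [ha1]; split_ifs <;> norm_num
    have h2 : 0 ≤ a2 := by rw [ha2]; split_ifs <;> norm_num
    have hkey : δ * (a3 + a4) ≤ X v := by
      by_cases hvu : v = u
      · have e3 : a3 = 1 := by rw [ha3, if_pos hvu]
        have e4 : a4 = 0 := by
          rw [ha4, if_neg]; rw [hvu]; exact huw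
        rw [e3, e4, hvu]
        have := min_le_left (X u) (X w)
        rw [← hδ] at this; linarith
      · by_cases hvw : v = w
        · have e3 : a3 = 0 := by rw [ha3, if_neg hvu]
          have e4 : a4 = 1 := by rw [ha4, if_pos hvw]
          rw [e3, e4, hvw]
          have := min_le_right (X u) (X w)
          rw [← hδ] at this; linarith
        · have e3 : a3 = 0 := by rw [ha3, if_neg hvu]
          have e4 : a4 = 0 := by rw [ha4, if_neg hvw]
          rw [e3, e4]
          simpa using hX0 v
    nlinarith [mul_nonneg hδpos.le h1, mul_nonneg hδpos.le h2]
  have hYm : ∀ k j, marg Y k j = a k j := by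
    intro k j
    have hsplit : marg Y k j = marg X k j + δ *
        ((if u' k = j then 1 else 0) + (if w' k = j then 1 else 0)
          - (if u k = j then 1 else 0) - (if w k = j then 1 else 0)) := by
      rw [marg, marg]
      have h : ∀ v : Fin m → Fin (n+1),
          (if v k = j then Y v else 0)
            = (if v k = j then X v else 0)
              + δ * ((if v k = j then (if v = u' then (1:ℝ) else 0) else 0)
                + (if v k = j then (if v = w' then (1:ℝ) else 0) else 0)
                - (if v k = j then (if v = u then (1:ℝ) else 0) else 0)
                - (if v k = j then (if v = w then (1:ℝ) else 0) else 0)) := by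
        intro v
        by_cases hv : v k = j <;> simp [hY, hv]
      rw [Finset.sum_congr rfl fun v _ => h v, Finset.sum_add_distrib,
        ← Finset.mul_sum]
      congr 1
      congr 1
      rw [Finset.sum_sub_distrib, Finset.sum_sub_distrib, Finset.sum_add_distrib,
        aux_ind_sum, aux_ind_sum, aux_ind_sum, aux_ind_sum]
    rw [hsplit, hXm]
    have hbr : (if u' k = j then (1:ℝ) else 0) + (if w' k = j then 1 else 0)
        - (if u k = j then 1 else 0) - (if w k = j then 1 else 0) = 0 := by
      by_cases hk : k = l
      · subst hk
        have h1 : u' k = w k := Function.update_self _ _ _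
        have h2 : w' k = u k := by
          have e : w' k = Fin.last n := Function.update_self _ _ _
          rw [e, hul]
        rw [h1, h2]; ring
      · have h1 : u' k = u k := Function.update_of_ne hk _ _
        have h2 : w' k = w k := Function.update_of_ne hk _ _
        rw [h1, h2]; ring
    rw [hbr]; ring
  have hdot : dot (extCost C A) Y = dot (extCost C A) X + δ *
      (extCost C A u' + extCost C A w' - extCost C A u - extCost C A w) := by
    rw [dot, dot]
    have h : ∀ v : Fin m → Fin (n+1), extCost C A v * Y v
        = extCost C A v * X v
          + δ * (extCost C A v * (if v = u' then (1:ℝ) else 0)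
            + extCost C A v * (if v = w' then (1:ℝ) else 0)
            - extCost C A v * (if v = u then (1:ℝ) else 0)
            - extCost C A v * (if v = w then (1:ℝ) else 0)) := by
      intro v; simp only [hY]; ring
    rw [Finset.sum_congr rfl fun v _ => h v, Finset.sum_add_distrib,
      ← Finset.mul_sum]
    congr 1
    congr 1
    rw [Finset.sum_sub_distrib, Finset.sum_sub_distrib, Finset.sum_add_distrib,
      aux_dot_ind, aux_dot_ind, aux_dot_ind, aux_dot_ind]
  refine ⟨Y, ⟨hY0, hYm⟩, ?_⟩
  rw [hdot, hcu, hcu', hcw', hcw]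
  have hCw := hC fun i => (w i).castPred (hwall i)
  nlinarith

end MPOT

open MPOT

/-- Step 3 of the proof of Theorem 3.1: under the assumptions of the first
equivalent form, every minimizer of `⟨C̄^{(1)}, ·⟩` over `Π(r̄_1^{(1)}, …, r̄_m^{(1)})`
places exactly mass `s` on the zeroth layer `T_∅ = [n]^m`. -/
theorem mpot_first_form_mass_on_original {m n : ℕ} (hm : 2 ≤ m) (hn : 1 ≤ n)
    (C : (Fin m → Fin n) → ℝ) (hC : ∀ v, 0 ≤ C v)
    (r : Fin m → Fin n → ℝ) (hr : ∀ k j, 0 ≤ r k j)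
    (s : ℝ) (hs0 : 0 ≤ s) (hs : ∀ k, s ≤ ∑ j, r k j)
    (hcond : ∀ k, ((m : ℝ) - 1) * (∑ j, r k j) + s ≤ ∑ i, ∑ j, r i j)
    (A : ℕ → ℝ) (hA1 : A 1 = 0) (hA : ∀ i, 1 ≤ i → i < m → A i < A (i + 1))
    (Xb : (Fin m → Fin (n + 1)) → ℝ) (hmem : Xb ∈ PiEq (extMarg1 r s))
    (hopt : ∀ Y ∈ PiEq (extMarg1 r s), dot (extCost C A) Xb ≤ dot (extCost C A) Y) :
    (∑ v : Fin m → Fin n, Xb (emb v)) = s := by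
  obtain ⟨hX0, hXm⟩ := hmem
  have hσ : (m : ℝ) - 1 ≠ 0 := by
    have h2 : (2 : ℝ) ≤ (m : ℝ) := by exact_mod_cast hm
    intro h; linarith
  set T : ℝ := ∑ i, ∑ j, r i j with hT
  -- sum of each extended marginal
  have hmargsum : ∀ k : Fin m, ∑ j, extMarg1 r s k j
      = T / ((m : ℝ) - 1) - s / ((m : ℝ) - 1) := by
    intro k
    simp only [extMarg1]
    rw [Fin.sum_univ_castSucc]
    simp only [Fin.snoc_castSucc, Fin.snoc_last]
    ring
  -- total mass of Xb
  have htot : ∑ u : Fin m → Fin (n + 1), Xb u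
      = T / ((m : ℝ) - 1) - s / ((m : ℝ) - 1) := by
    have k0 : Fin m := ⟨0, by omega⟩
    rw [← marg_total Xb k0, Finset.sum_congr rfl fun j _ => hXm k0 j,
      hmargsum k0]
  -- weighted mass counting artificial coordinates
  have hlast : ∑ u : Fin m → Fin (n + 1), (nLast u : ℝ) * Xb u
      = (m : ℝ) * (T / ((m : ℝ) - 1)) - T - (m : ℝ) * (s / ((m : ℝ) - 1)) := by
    rw [← marg_last_total Xb]
    rw [Finset.sum_congr rfl fun k _ => hXm k (Fin.last n)]
    have he : ∀ k : Fin m, extMarg1 r s k (Fin.last n)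
        = T / ((m : ℝ) - 1) - (∑ j, r k j) - s / ((m : ℝ) - 1) := by
      intro k; simp [extMarg1, hT]
    rw [Finset.sum_congr rfl fun k _ => he k]
    rw [Finset.sum_sub_distrib, Finset.sum_sub_distrib, Finset.sum_const,
      Finset.sum_const, Finset.card_univ, Fintype.card_fin, ← hT,
      nsmul_eq_mul, nsmul_eq_mul]
  -- key identity
  have key1 : ∑ u : Fin m → Fin (n + 1), ((nLast u : ℝ) - 1) * Xb u = -s := by
    have : ∑ u : Fin m → Fin (n + 1), ((nLast u : ℝ) - 1) * Xb u
        = (∑ u : Fin m → Fin (n + 1), (nLast u : ℝ) * Xb u)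
          - ∑ u : Fin m → Fin (n + 1), Xb u := by
      rw [← Finset.sum_sub_distrib]
      exact Finset.sum_congr rfl fun u _ => by ring
    rw [this, hlast, htot]
    field_simp
    ring
  -- no mass on layers with at least two artificial coordinates
  set F : Finset (Fin m → Fin (n + 1)) :=
    univ.filter fun u => nLast u = 0 with hF
  have hsplitF : ∑ u : Fin m → Fin (n + 1), ((nLast u : ℝ) - 1) * Xb u
      = -(∑ u ∈ F, Xb u)
        + ∑ u ∈ univ.filter (fun u => ¬ nLast u = 0),
            ((nLast u : ℝ) - 1) * Xb u := by
    rw [← Finset.sum_filter_add_sum_filter_not univ (fun u => nLast u = 0)]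
    congr 1
    rw [← Finset.sum_neg_distrib]
    refine Finset.sum_congr rfl fun u hu => ?_
    have h0 : nLast u = 0 := (Finset.mem_filter.1 hu).2
    rw [h0]; push_cast; ring
  have key2 : ∀ u : Fin m → Fin (n + 1), 2 ≤ nLast u → Xb u = 0 := by
    intro u hu2
    by_contra hne
    have hXu : 0 < Xb u := lt_of_le_of_ne (hX0 u) (Ne.symm hne)
    -- positive excess
    have hterm : (0:ℝ) < ((nLast u : ℝ) - 1) * Xb u := by
      have : (1:ℝ) ≤ (nLast u : ℝ) - 1 := by
        have : (2:ℝ) ≤ (nLast u : ℝ) := by exact_mod_cast hu2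
        linarith
      nlinarith
    have humem : u ∈ univ.filter (fun u => ¬ nLast u = 0) := by
      simp only [Finset.mem_filter, Finset.mem_univ, true_and]
      omega
    have hP : (0:ℝ) < ∑ u ∈ univ.filter (fun u => ¬ nLast u = 0),
        ((nLast u : ℝ) - 1) * Xb u := by
      refine lt_of_lt_of_le hterm (Finset.single_le_sum (f := fun v => ((nLast v : ℝ) - 1) * Xb v) ?_ humem)
      intro v hv
      have hv0 : ¬ nLast v = 0 := (Finset.mem_filter.1 hv).2
      have h1 : (1:ℝ) ≤ (nLast v : ℝ) := by
        have : 1 ≤ nLast v := by omega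
        exact_mod_cast this
      have := hX0 v
      show (0:ℝ) ≤ ((nLast v : ℝ) - 1) * Xb v
      nlinarith
    have hM0 : 0 < ∑ u ∈ F, Xb u := by
      have := key1
      rw [hsplitF] at this
      linarith
    obtain ⟨w, hwF, hw⟩ := Finset.exists_lt_of_sum_lt
      (f := fun _ => (0:ℝ)) (g := Xb) (by simpa using hM0)
    have hw0 : nLast w = 0 := by
      have := Finset.mem_filter.1 hwF
      exact this.2
    obtain ⟨Y, hYmem, hYlt⟩ := swap_improve hm C hC A hA1 hA
      (extMarg1 r s) Xb ⟨hX0, hXm⟩ u w hu2 hw0 hXu hw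
    have := hopt Y hYmem
    linarith
  -- the excess vanishes
  have hPzero : ∑ u ∈ univ.filter (fun u => ¬ nLast u = 0),
      ((nLast u : ℝ) - 1) * Xb u = 0 := by
    refine Finset.sum_eq_zero fun u hu => ?_
    have hu0 : ¬ nLast u = 0 := (Finset.mem_filter.1 hu).2
    by_cases h1 : nLast u = 1
    · rw [h1]; norm_num
    · have h2 : 2 ≤ nLast u := by omega
      rw [key2 u h2]; ring
  have hF_s : ∑ u ∈ F, Xb u = s := by
    have := key1
    rw [hsplitF, hPzero] at this
    linarith
  -- re-index the zero layer by [n]^m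
  have hreindex : (∑ v : Fin m → Fin n, Xb (emb v)) = ∑ u ∈ F, Xb u := by
    refine Finset.sum_nbij' (i := fun v => emb v)
      (j := fun u => fun i =>
        if h : u i = Fin.last n then (⟨0, hn⟩ : Fin n) else (u i).castPred h)
      ?_ ?_ ?_ ?_ ?_
    · intro v _
      simp only [hF, Finset.mem_filter, Finset.mem_univ, true_and]
      rw [nLast, Finset.card_eq_zero, Finset.filter_eq_empty_iff]
      intro i _
      exact (Fin.castSucc_lt_last (v i)).ne
    · intro u _; exact Finset.mem_univ _
    · intro v _
      funext i
      have h : ¬ emb v i = Fin.last n := (Fin.castSucc_lt_last (v i)).ne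
      simp only [dif_neg h]
      exact Fin.castPred_castSucc _
    · intro u hu
      have hu0 : nLast u = 0 := (Finset.mem_filter.1 hu).2
      have hall : ∀ i, u i ≠ Fin.last n := by
        intro i hi
        have hmem : i ∈ univ.filter fun ℓ => u ℓ = Fin.last n := by simp [hi]
        have hpos := Finset.card_pos.2 ⟨i, hmem⟩
        have : (univ.filter fun ℓ => u ℓ = Fin.last n).card = 0 := hu0
        omega
      funext i
      simp only [emb, dif_neg (hall i)]
      exact Fin.castSucc_castPred _ _
    · intro v _; rfl
  rw [hreindex, hF_s]
end
end
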